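/- arXiv:1312.7484 — 4 statements merged into one kernel-verified Lean document; each statement's English description precedes it below -/
import Mathlib

section
/- Let N ≥ 1, 1 < p < ∞. Let J : ℝ^N → ℝ be a nonnegative bounded measurable function supported in the closed unit ball B[0,1], and let ρ satisfy hypothesis (H2) with constant K > 0. Then for every u ∈ L^p(ℝ^N, ρ), the convolution J∗u(x) = ∫_{ℝ^N} J(x − y) u(y) dy is well defined and satisfies ‖J∗u‖_{L^p(ℝ^N, ρ)} ≤ K^{1/p} ‖J‖_{L¹(ℝ^N)} ‖u‖_{L^p(ℝ^N, ρ)}. -/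
open MeasureTheory Metric
open scoped ENNReal

/-- For `J` nonnegative bounded measurable supported in the closed unit ball
and `ρ` satisfying (H2) with constant `K > 0`, the convolution `J∗u` is well defined for
every `u ∈ L^p(ℝ^N, ρ)` and `‖J∗u‖_{L^p(ρ)} ≤ K^{1/p} ‖J‖_{L¹} ‖u‖_{L^p(ρ)}`. -/
theorem stmt_1 (N : ℕ) (hN : 1 ≤ N) (p : ℝ) (hp : 1 < p)
    (J ρ u : EuclideanSpace ℝ (Fin N) → ℝ)
    (hJmeas : Measurable J) (hJnn : ∀ x, 0 ≤ J x)
    (hJbdd : ∃ M : ℝ, ∀ x, |J x| ≤ M)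
    (hJsupp : ∀ x, J x ≠ 0 → ‖x‖ ≤ 1)
    (hρpos : ∀ x, 0 < ρ x) (hρint : Integrable ρ)
    (hρeven : ∀ x, ρ (-x) = ρ x) (hρ1 : ∫ x, ρ x = 1)
    (K : ℝ) (hK : 0 < K)
    (hH2 : ∀ y x : EuclideanSpace ℝ (Fin N), dist x y ≤ 1 → ρ x ≤ K * ρ y)
    (humeas : Measurable u)
    (huLp : Integrable fun x => |u x| ^ p * ρ x) :
    (∀ x : EuclideanSpace ℝ (Fin N), Integrable fun y => J (x - y) * u y) ∧
    (∫ x, |∫ y, J (x - y) * u y| ^ p * ρ x) ^ (1 / p)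
      ≤ K ^ (1 / p) * (∫ x, |J x|) * (∫ x, |u x| ^ p * ρ x) ^ (1 / p) := by
  obtain ⟨M, hM⟩ := hJbdd
  have hM0 : 0 ≤ M := (abs_nonneg _).trans (hM 0)
  have hp0 : (0:ℝ) < p := lt_trans one_pos hp
  have hpq : p.HolderConjugate (p / (p - 1)) := Real.HolderConjugate.conjExponent hp
  set q : ℝ := p / (p - 1) with hqdef
  set Jn : EuclideanSpace ℝ (Fin N) → ℝ≥0∞ := fun z => ENNReal.ofReal (J z) with hJndef
  set v : EuclideanSpace ℝ (Fin N) → ℝ≥0∞ := fun y => ENNReal.ofReal |u y| with hvdef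
  have hJnm : Measurable Jn := hJmeas.ennreal_ofReal
  have hvm : Measurable v := humeas.abs.ennreal_ofReal
  have htr : ∀ (x : EuclideanSpace ℝ (Fin N)) (f : EuclideanSpace ℝ (Fin N) → ℝ≥0∞),
      Measurable f → ∫⁻ y, f (x - y) = ∫⁻ y, f y := fun x f hf =>
    (Measure.measurePreserving_sub_left volume x).lintegral_comp hf
  -- lintegral form of the `u` integral
  have huρ : ∫⁻ y, v y ^ p * ENNReal.ofReal (ρ y) = ENNReal.ofReal (∫ y, |u y| ^ p * ρ y) := by
    rw [ofReal_integral_eq_lintegral_ofReal huLp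
      (.of_forall fun y => mul_nonneg (Real.rpow_nonneg (abs_nonneg _) p) (hρpos y).le)]
    refine lintegral_congr fun y => ?_
    rw [ENNReal.ofReal_mul (Real.rpow_nonneg (abs_nonneg _) p),
      ENNReal.ofReal_rpow_of_nonneg (abs_nonneg _) hp0.le]
  -- local integrability of |u| on balls
  have hIball : ∀ x : EuclideanSpace ℝ (Fin N), ∫⁻ y in closedBall x 1, v y < ⊤ := by
    intro x
    have hfin1 : ∫⁻ y in closedBall x 1, v y ^ p < ⊤ := by
      calc ∫⁻ y in closedBall x 1, v y ^ p
          ≤ ∫⁻ y in closedBall x 1,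
              ENNReal.ofReal (K / ρ x) * (v y ^ p * ENNReal.ofReal (ρ y)) := by
            refine setLIntegral_mono' measurableSet_closedBall fun y hy => ?_
            have h1 : ρ x ≤ K * ρ y := hH2 y x (by simpa [dist_comm] using mem_closedBall.mp hy)
            have h2 : (1:ℝ≥0∞) ≤ ENNReal.ofReal (K / ρ x * ρ y) := by
              refine ENNReal.one_le_ofReal.mpr ?_
              rw [div_mul_eq_mul_div, le_div_iff₀ (hρpos x), one_mul]
              linarith
            calc v y ^ p = v y ^ p * 1 := (mul_one _).symm
              _ ≤ v y ^ p * ENNReal.ofReal (K / ρ x * ρ y) := mul_le_mul_right h2 _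
              _ = ENNReal.ofReal (K / ρ x) * (v y ^ p * ENNReal.ofReal (ρ y)) := by
                  rw [ENNReal.ofReal_mul (div_nonneg hK.le (hρpos x).le)]; ring
        _ = ENNReal.ofReal (K / ρ x)
              * ∫⁻ y in closedBall x 1, v y ^ p * ENNReal.ofReal (ρ y) :=
            lintegral_const_mul' _ _ ENNReal.ofReal_ne_top
        _ ≤ ENNReal.ofReal (K / ρ x) * ∫⁻ y, v y ^ p * ENNReal.ofReal (ρ y) :=
            mul_le_mul_right (setLIntegral_le_lintegral _ _) _
        _ < ⊤ := by
            rw [huρ]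
            exact ENNReal.mul_lt_top ENNReal.ofReal_lt_top ENNReal.ofReal_lt_top
    have key := ENNReal.lintegral_mul_le_Lp_mul_Lq (volume.restrict (closedBall x 1)) hpq.symm
      (f := fun _ => (1:ℝ≥0∞)) (g := v) aemeasurable_const hvm.aemeasurable
    simp only [Pi.mul_apply, one_mul, ENNReal.one_rpow, lintegral_one,
      Measure.restrict_apply_univ] at key
    calc ∫⁻ y in closedBall x 1, v y ≤ _ := key
      _ < ⊤ := ENNReal.mul_lt_top
          (ENNReal.rpow_lt_top_of_nonneg hpq.symm.one_div_nonneg measure_closedBall_lt_top.ne)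
          (ENNReal.rpow_lt_top_of_nonneg hpq.one_div_nonneg hfin1.ne)
  -- Part 1: integrability of the convolution integrand
  have hconv : ∀ x : EuclideanSpace ℝ (Fin N), Integrable fun y => J (x - y) * u y := by
    intro x
    constructor
    · exact ((hJmeas.comp (measurable_const.sub measurable_id)).mul humeas).aestronglyMeasurable
    · rw [hasFiniteIntegral_iff_norm]
      calc ∫⁻ y, ENNReal.ofReal ‖J (x - y) * u y‖
          ≤ ∫⁻ y, (closedBall x 1).indicator (fun y => ENNReal.ofReal M * v y) y := by
            refine lintegral_mono fun y => ?_
            by_cases hy : y ∈ closedBall x 1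
            · rw [Set.indicator_of_mem hy, Real.norm_eq_abs, abs_mul,
                ENNReal.ofReal_mul (abs_nonneg _)]
              exact mul_le_mul_left (ENNReal.ofReal_le_ofReal (hM _)) _
            · have hz : J (x - y) = 0 := by
                by_contra h
                refine hy (mem_closedBall.mpr ?_)
                have := hJsupp _ h
                rwa [← dist_eq_norm, dist_comm] at this
              simp [hz]
        _ = ENNReal.ofReal M * ∫⁻ y in closedBall x 1, v y := by
            rw [lintegral_indicator measurableSet_closedBall,
              lintegral_const_mul' _ _ ENNReal.ofReal_ne_top]
        _ < ⊤ := ENNReal.mul_lt_top ENNReal.ofReal_lt_top (hIball x)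
  refine ⟨hconv, ?_⟩
  -- Integrability of J
  have hJint : Integrable J := by
    have hbd : ∀ z, ‖J z‖ ≤ (closedBall (0 : EuclideanSpace ℝ (Fin N)) 1).indicator
        (fun _ => M) z := by
      intro z
      by_cases hz : z ∈ closedBall (0 : EuclideanSpace ℝ (Fin N)) 1
      · simpa [Set.indicator_of_mem hz, Real.norm_eq_abs] using hM z
      · have h0 : J z = 0 := by
          by_contra h
          exact hz (mem_closedBall.mpr (by simpa [dist_zero_right] using hJsupp z h))
        simp [Set.indicator_of_notMem hz, h0]
    exact Integrable.mono'
      ((integrableOn_const measure_closedBall_lt_top.ne).integrable_indicator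
        measurableSet_closedBall)
      hJmeas.aestronglyMeasurable (.of_forall hbd)
  have hA0 : 0 ≤ ∫ z, J z := integral_nonneg hJnn
  set C : ℝ≥0∞ := ∫⁻ z, Jn z with hCdef
  have hCof : C = ENNReal.ofReal (∫ z, J z) :=
    (ofReal_integral_eq_lintegral_ofReal hJint (.of_forall hJnn)).symm
  have hCt : C ≠ ⊤ := by rw [hCof]; exact ENNReal.ofReal_ne_top
  have htrC : ∀ x, ∫⁻ y, Jn (x - y) = C := fun x => htr x Jn hJnm
  set G : EuclideanSpace ℝ (Fin N) → ℝ≥0∞ := fun x => ∫⁻ y, Jn (x - y) * v y with hGdef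
  set W : EuclideanSpace ℝ (Fin N) → ℝ≥0∞ := fun x => ∫⁻ y, Jn (x - y) * v y ^ p with hWdef
  -- pointwise Hölder
  have hq1 : 1/q + 1/p = 1 := by
    rw [one_div, one_div]; exact hpq.symm.inv_add_inv_eq_one
  have hHold : ∀ x, G x ≤ C ^ (1/q) * W x ^ (1/p) := by
    intro x
    have key := ENNReal.lintegral_mul_le_Lp_mul_Lq volume hpq.symm
      (f := fun y => Jn (x - y) ^ (1/q)) (g := fun y => Jn (x - y) ^ (1/p) * v y)
      ((hJnm.comp (measurable_const.sub measurable_id)).pow_const _).aemeasurable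
      (((hJnm.comp (measurable_const.sub measurable_id)).pow_const _).mul hvm).aemeasurable
    simp only [Pi.mul_apply] at key
    have e1 : ∀ y, Jn (x - y) ^ (1/q) * (Jn (x - y) ^ (1/p) * v y) = Jn (x - y) * v y := by
      intro y
      rw [← mul_assoc, ← ENNReal.rpow_add_of_nonneg _ _ hpq.symm.one_div_nonneg
        hpq.one_div_nonneg, hq1, ENNReal.rpow_one]
    have e2 : ∀ y, (Jn (x - y) ^ (1/q)) ^ q = Jn (x - y) := by
      intro y
      rw [← ENNReal.rpow_mul, one_div, inv_mul_cancel₀ hpq.symm.ne_zero, ENNReal.rpow_one]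
    have e3 : ∀ y, (Jn (x - y) ^ (1/p) * v y) ^ p = Jn (x - y) * v y ^ p := by
      intro y
      rw [ENNReal.mul_rpow_of_nonneg _ _ hp0.le, ← ENNReal.rpow_mul, one_div,
        inv_mul_cancel₀ hp0.ne', ENNReal.rpow_one]
    calc G x = ∫⁻ y, Jn (x - y) ^ (1/q) * (Jn (x - y) ^ (1/p) * v y) :=
          lintegral_congr fun y => (e1 y).symm
      _ ≤ (∫⁻ y, (Jn (x - y) ^ (1/q)) ^ q) ^ (1/q)
            * (∫⁻ y, (Jn (x - y) ^ (1/p) * v y) ^ p) ^ (1/p) := key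
      _ = C ^ (1/q) * W x ^ (1/p) := by
          rw [lintegral_congr e2, lintegral_congr e3, htrC x]
  have hstep2 : ∀ x, G x ^ p ≤ C ^ (p - 1) * W x := by
    intro x
    have hqp : 1/q * p = p - 1 := by
      rw [one_div, inv_mul_eq_div, hpq.div_conj_eq_sub_one]
    calc G x ^ p ≤ (C ^ (1/q) * W x ^ (1/p)) ^ p :=
          ENNReal.rpow_le_rpow (hHold x) hp0.le
      _ = C ^ (p - 1) * W x := by
          rw [ENNReal.mul_rpow_of_nonneg _ _ hp0.le, ← ENNReal.rpow_mul, ← ENNReal.rpow_mul,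
            hqp, one_div, inv_mul_cancel₀ hp0.ne', ENNReal.rpow_one]
  -- measurable representative of ρ
  set ρm : EuclideanSpace ℝ (Fin N) → ℝ := hρint.1.mk ρ with hρmdef
  have hρmm : Measurable ρm := hρint.1.stronglyMeasurable_mk.measurable
  have hρae : ρ =ᵐ[volume] ρm := hρint.1.ae_eq_mk
  -- Fubini step
  have hswap : ∫⁻ x, W x * ENNReal.ofReal (ρ x)
      ≤ ENNReal.ofReal K * C * ∫⁻ y, v y ^ p * ENNReal.ofReal (ρ y) := by
    have h1 : ∫⁻ x, W x * ENNReal.ofReal (ρ x) = ∫⁻ x, W x * ENNReal.ofReal (ρm x) :=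
      lintegral_congr_ae (hρae.mono fun x hx => by simp only [hx])
    have h2 : ∫⁻ x, W x * ENNReal.ofReal (ρm x)
        = ∫⁻ x, ∫⁻ y, Jn (x - y) * v y ^ p * ENNReal.ofReal (ρm x) := by
      exact lintegral_congr fun x =>
        (lintegral_mul_const' (ENNReal.ofReal (ρm x))
          (fun y => Jn (x - y) * v y ^ p) ENNReal.ofReal_ne_top).symm
    have h3 : ∫⁻ x, ∫⁻ y, Jn (x - y) * v y ^ p * ENNReal.ofReal (ρm x)
        = ∫⁻ y, ∫⁻ x, Jn (x - y) * v y ^ p * ENNReal.ofReal (ρm x) := by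
      refine lintegral_lintegral_swap ?_
      exact (((hJnm.comp (measurable_fst.sub measurable_snd)).mul
        ((hvm.comp measurable_snd).pow_const p)).mul
        ((hρmm.comp measurable_fst).ennreal_ofReal)).aemeasurable
    have h4 : ∀ y, ∫⁻ x, Jn (x - y) * v y ^ p * ENNReal.ofReal (ρm x)
        ≤ v y ^ p * (ENNReal.ofReal K * C * ENNReal.ofReal (ρ y)) := by
      intro y
      have e : ∫⁻ x, Jn (x - y) * v y ^ p * ENNReal.ofReal (ρm x)
          = ∫⁻ x, Jn (x - y) * v y ^ p * ENNReal.ofReal (ρ x) :=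
        lintegral_congr_ae (hρae.mono fun x hx => by simp only [hx])
      have htry : ∫⁻ x, Jn (x - y) = C :=
        (measurePreserving_sub_right volume y).lintegral_comp hJnm
      rw [e]
      calc ∫⁻ x, Jn (x - y) * v y ^ p * ENNReal.ofReal (ρ x)
          ≤ ∫⁻ x, Jn (x - y) * (v y ^ p * ENNReal.ofReal (K * ρ y)) := by
            refine lintegral_mono fun x => ?_
            rcases eq_or_ne (J (x - y)) 0 with h | h
            · simp [hJndef, h]
            · have h1' : ρ x ≤ K * ρ y := hH2 y x (by rw [dist_eq_norm]; exact hJsupp _ h)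
              rw [mul_assoc]
              exact mul_le_mul_right (mul_le_mul_right (ENNReal.ofReal_le_ofReal h1') _) _
        _ = (∫⁻ x, Jn (x - y)) * (v y ^ p * ENNReal.ofReal (K * ρ y)) :=
            lintegral_mul_const' _ _ (ENNReal.mul_ne_top
              (ENNReal.rpow_ne_top_of_nonneg hp0.le ENNReal.ofReal_ne_top)
              ENNReal.ofReal_ne_top)
        _ = v y ^ p * (ENNReal.ofReal K * C * ENNReal.ofReal (ρ y)) := by
            rw [htry, ENNReal.ofReal_mul hK.le]; ring
    calc ∫⁻ x, W x * ENNReal.ofReal (ρ x)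
        = ∫⁻ y, ∫⁻ x, Jn (x - y) * v y ^ p * ENNReal.ofReal (ρm x) := by
          rw [h1, h2, h3]
      _ ≤ ∫⁻ y, v y ^ p * (ENNReal.ofReal K * C * ENNReal.ofReal (ρ y)) :=
          lintegral_mono fun y => h4 y
      _ = ENNReal.ofReal K * C * ∫⁻ y, v y ^ p * ENNReal.ofReal (ρ y) := by
          rw [← lintegral_const_mul' _ _ (ENNReal.mul_ne_top ENNReal.ofReal_ne_top hCt)]
          exact lintegral_congr fun y => by ring
  -- main lintegral bound
  have hIbound : ∫⁻ x, G x ^ p * ENNReal.ofReal (ρ x)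
      ≤ ENNReal.ofReal K * C ^ p * ENNReal.ofReal (∫ y, |u y| ^ p * ρ y) := by
    have hCp : C ^ (p - 1) * C = C ^ p := by
      conv_rhs => rw [show p = (p - 1) + 1 by ring]
      rw [ENNReal.rpow_add_of_nonneg _ _ (by linarith) zero_le_one, ENNReal.rpow_one]
    calc ∫⁻ x, G x ^ p * ENNReal.ofReal (ρ x)
        ≤ ∫⁻ x, C ^ (p - 1) * (W x * ENNReal.ofReal (ρ x)) := by
          refine lintegral_mono fun x => ?_
          rw [← mul_assoc]
          exact mul_le_mul_left (hstep2 x) _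
      _ = C ^ (p - 1) * ∫⁻ x, W x * ENNReal.ofReal (ρ x) :=
          lintegral_const_mul' _ _ (ENNReal.rpow_ne_top_of_nonneg (by linarith) hCt)
      _ ≤ C ^ (p - 1) * (ENNReal.ofReal K * C * ∫⁻ y, v y ^ p * ENNReal.ofReal (ρ y)) :=
          mul_le_mul_right hswap _
      _ = ENNReal.ofReal K * C ^ p * ENNReal.ofReal (∫ y, |u y| ^ p * ρ y) := by
          rw [huρ, ← hCp]; ring
  -- measurability of the convolution
  have hgsm : AEStronglyMeasurable (fun x => ∫ y, J (x - y) * u y) volume := by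
    have hsm : StronglyMeasurable fun z : EuclideanSpace ℝ (Fin N) × EuclideanSpace ℝ (Fin N) =>
        J (z.1 - z.2) * u z.2 :=
      ((hJmeas.comp (measurable_fst.sub measurable_snd)).mul
        (humeas.comp measurable_snd)).stronglyMeasurable
    exact hsm.integral_prod_right'.aestronglyMeasurable
  have hgle : ∀ x, ENNReal.ofReal |∫ y, J (x - y) * u y| ≤ G x := by
    intro x
    calc ENNReal.ofReal |∫ y, J (x - y) * u y|
        ≤ ENNReal.ofReal (∫ y, |J (x - y) * u y|) := ENNReal.ofReal_le_ofReal (by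
          simpa [Real.norm_eq_abs, abs_mul] using
            norm_integral_le_integral_norm (μ := volume) (fun y => J (x - y) * u y))
      _ = ∫⁻ y, ENNReal.ofReal |J (x - y) * u y| :=
          ofReal_integral_eq_lintegral_ofReal (hconv x).abs (.of_forall fun y => abs_nonneg _)
      _ = G x := lintegral_congr fun y => by
          rw [abs_mul, abs_of_nonneg (hJnn _), ENNReal.ofReal_mul (hJnn _)]
  -- from lintegral to integral
  have hT : ∫ x, |∫ y, J (x - y) * u y| ^ p * ρ x
      = (∫⁻ x, ENNReal.ofReal (|∫ y, J (x - y) * u y| ^ p * ρ x)).toReal := by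
    refine integral_eq_lintegral_of_nonneg_ae
      (.of_forall fun x => mul_nonneg (Real.rpow_nonneg (abs_nonneg _) _) (hρpos x).le) ?_
    exact (((continuous_abs.measurable.comp_aemeasurable hgsm.aemeasurable).pow_const p).mul hρint.aemeasurable).aestronglyMeasurable
  have hTle : ∫⁻ x, ENNReal.ofReal (|∫ y, J (x - y) * u y| ^ p * ρ x)
      ≤ ∫⁻ x, G x ^ p * ENNReal.ofReal (ρ x) := by
    refine lintegral_mono fun x => ?_
    rw [ENNReal.ofReal_mul (Real.rpow_nonneg (abs_nonneg _) _),
      ← ENNReal.ofReal_rpow_of_nonneg (abs_nonneg _) hp0.le]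
    exact mul_le_mul_left (ENNReal.rpow_le_rpow (hgle x) hp0.le) _
  have hB0 : 0 ≤ ∫ y, |u y| ^ p * ρ y :=
    integral_nonneg fun y => mul_nonneg (Real.rpow_nonneg (abs_nonneg _) _) (hρpos y).le
  have hTle2 : ∫ x, |∫ y, J (x - y) * u y| ^ p * ρ x
      ≤ K * (∫ z, J z) ^ p * (∫ y, |u y| ^ p * ρ y) := by
    rw [hT]
    have hR : (ENNReal.ofReal K * C ^ p * ENNReal.ofReal (∫ y, |u y| ^ p * ρ y)).toReal
        = K * (∫ z, J z) ^ p * (∫ y, |u y| ^ p * ρ y) := by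
      rw [hCof, ENNReal.ofReal_rpow_of_nonneg hA0 hp0.le,
        ← ENNReal.ofReal_mul hK.le,
        ← ENNReal.ofReal_mul (mul_nonneg hK.le (Real.rpow_nonneg hA0 _)),
        ENNReal.toReal_ofReal (by positivity)]
    calc (∫⁻ x, ENNReal.ofReal (|∫ y, J (x - y) * u y| ^ p * ρ x)).toReal
        ≤ (ENNReal.ofReal K * C ^ p * ENNReal.ofReal (∫ y, |u y| ^ p * ρ y)).toReal :=
          ENNReal.toReal_mono
            (ENNReal.mul_ne_top (ENNReal.mul_ne_top ENNReal.ofReal_ne_top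
              (ENNReal.rpow_ne_top_of_nonneg hp0.le hCt)) ENNReal.ofReal_ne_top)
            (le_trans hTle hIbound)
      _ = _ := hR
  have hT0 : 0 ≤ ∫ x, |∫ y, J (x - y) * u y| ^ p * ρ x :=
    integral_nonneg fun x => mul_nonneg (Real.rpow_nonneg (abs_nonneg _) _) (hρpos x).le
  have hAeq : (∫ x, |J x|) = ∫ x, J x :=
    integral_congr_ae (.of_forall fun x => abs_of_nonneg (hJnn x))
  rw [hAeq]
  calc (∫ x, |∫ y, J (x - y) * u y| ^ p * ρ x) ^ (1/p)
      ≤ (K * (∫ z, J z) ^ p * (∫ y, |u y| ^ p * ρ y)) ^ (1/p) :=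
        Real.rpow_le_rpow hT0 hTle2 (by positivity)
    _ = K ^ (1/p) * (∫ z, J z) * (∫ y, |u y| ^ p * ρ y) ^ (1/p) := by
        rw [Real.mul_rpow (mul_nonneg hK.le (Real.rpow_nonneg hA0 _)) hB0,
          Real.mul_rpow hK.le (Real.rpow_nonneg hA0 _),
          ← Real.rpow_mul hA0, mul_one_div_cancel hp0.ne', Real.rpow_one]
end

section
/- Let N ≥ 1, 1 < p < ∞, h > 0. Suppose f : ℝ → ℝ is globally Lipschitz with constant k₁ > 0 (H1), J : ℝ^N → ℝ is a nonnegative bounded measurable function supported in the closed unit ball, and ρ satisfies hypothesis (H2). Then the Cauchy problem for ∂u/∂t = −u + J∗(f∘u) + h is globally well posed in L^p(ℝ^N, ρ): for every u₀ ∈ L^p(ℝ^N, ρ) there exists a unique map u : ℝ → L^p(ℝ^N, ρ) such that u(0) = u₀ and u is differentiable with derivative u'(t) = −u(t) + J∗(f∘u(t)) + h for every t ∈ ℝ. -/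
open MeasureTheory Metric ENNReal

section Aux
open NNReal Set

section ODE

variable {E : Type*} [NormedAddCommGroup E] [NormedSpace ℝ E] [CompleteSpace E]
variable {F : E → E} {L : ℝ≥0}

lemma localSol (hL : LipschitzWith L F) {a b t₀ : ℝ} (x₀ : E)
    (ht₀ : t₀ ∈ Icc a b) (hlen : b - a ≤ (2 * ((L : ℝ) + 1))⁻¹) :
    ∃ u : ℝ → E, u t₀ = x₀ ∧ ∀ t ∈ Icc a b, HasDerivWithinAt u (F (u t)) (Icc a b) t := by
  have hL0 : (0:ℝ) ≤ (L : ℝ) := L.coe_nonneg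
  set R : ℝ := ‖F x₀‖ + 1 with hR
  have hR1 : 1 ≤ R := by have := norm_nonneg (F x₀); linarith
  have hRn : ((R.toNNReal : ℝ)) = R := Real.coe_toNNReal _ (by linarith)
  have hCn : (((((L : ℝ) + 1) * R).toNNReal : ℝ)) = ((L : ℝ) + 1) * R :=
    Real.coe_toNNReal _ (by positivity)
  have hpl : IsPicardLindelof (fun _ x => F x) (⟨t₀, ht₀⟩ : Icc a b) x₀ R.toNNReal 0
      (((L : ℝ) + 1) * R).toNNReal L :=
    { lipschitzOnWith := fun t _ => hL.lipschitzOnWith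
      continuousOn := fun x _ => continuousOn_const
      norm_le := by
        intro t _ x hx
        rw [hRn] at hx
        rw [hCn]
        have h1 : ‖F x - F x₀‖ ≤ (L : ℝ) * ‖x - x₀‖ := by
          simpa [dist_eq_norm] using hL.dist_le_mul x x₀
        have h2 : ‖x - x₀‖ ≤ R := by
          simpa [dist_eq_norm] using mem_closedBall_iff_norm.mp hx
        have h3 : ‖F x‖ ≤ ‖F x₀‖ + ‖F x - F x₀‖ := by
          calc ‖F x‖ = ‖F x₀ + (F x - F x₀)‖ := by congr 1; abel
            _ ≤ ‖F x₀‖ + ‖F x - F x₀‖ := norm_add_le _ _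
        have h4 : (L : ℝ) * ‖x - x₀‖ ≤ (L : ℝ) * R := by
          exact mul_le_mul_of_nonneg_left h2 hL0
        have h5 : ‖F x₀‖ ≤ R := by linarith
        nlinarith
      mul_max_le := by
        simp only [hCn, tsub_zero, hRn, NNReal.coe_zero, sub_zero]
        have hmax : max (b - t₀) (t₀ - a) ≤ (2 * ((L : ℝ) + 1))⁻¹ :=
          max_le (by linarith [ht₀.1]) (by linarith [ht₀.2])
        have hCpos : (0:ℝ) ≤ ((L : ℝ) + 1) * R := by positivity
        have heq : ((L : ℝ) + 1) * R * (2 * ((L : ℝ) + 1))⁻¹ = R / 2 := by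
          have : (L : ℝ) + 1 ≠ 0 := by positivity
          field_simp
        calc ((L : ℝ) + 1) * R * max (b - t₀) (t₀ - a)
            ≤ ((L : ℝ) + 1) * R * (2 * ((L : ℝ) + 1))⁻¹ :=
              mul_le_mul_of_nonneg_left hmax hCpos
          _ = R / 2 := heq
          _ ≤ R := by linarith }
  exact hpl.exists_eq_forall_mem_Icc_hasDerivWithinAt₀

lemma pasteSol {a b c : ℝ} (hab : a ≤ b) (hbc : b ≤ c) {u v : ℝ → E}
    (hu : ∀ t ∈ Icc a b, HasDerivWithinAt u (F (u t)) (Icc a b) t)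
    (hv : ∀ t ∈ Icc b c, HasDerivWithinAt v (F (v t)) (Icc b c) t)
    (hm : u b = v b) :
    ∃ w : ℝ → E, (∀ t, t ≤ b → w t = u t) ∧ (∀ t, b ≤ t → w t = v t) ∧
      ∀ t ∈ Icc a c, HasDerivWithinAt w (F (w t)) (Icc a c) t := by
  classical
  set w : ℝ → E := fun t => if t ≤ b then u t else v t with hwdef
  have hwu : ∀ t, t ≤ b → w t = u t := fun t ht => if_pos ht
  have hwv : ∀ t, b ≤ t → w t = v t := by
    intro t ht
    by_cases h : t ≤ b
    · have : t = b := le_antisymm h ht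
      subst this
      simp [w, hm]
    · exact if_neg h
  refine ⟨w, hwu, hwv, ?_⟩
  intro t ht
  rcases lt_trichotomy t b with h | h | h
  · -- t < b
    have htab : t ∈ Icc a b := ⟨ht.1, h.le⟩
    have hev : w =ᶠ[nhdsWithin t (Icc a b)] u :=
      Filter.mem_of_superset (nhdsWithin_le_nhds (Iic_mem_nhds h)) fun s hs => hwu s hs
    have h1 : HasDerivWithinAt w (F (w t)) (Icc a b) t := by
      rw [hwu t h.le]
      exact (hu t htab).congr_of_eventuallyEq hev (hwu t h.le)
    refine (hasDerivWithinAt_inter (Iio_mem_nhds h)).mp ?_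
    exact h1.mono fun s hs => ⟨hs.1.1, hs.2.le⟩
  · -- t = b
    subst h
    have h1 : HasDerivWithinAt w (F (w t)) (Icc a t) t := by
      rw [hwu t le_rfl]
      exact (hu t ⟨hab, le_rfl⟩).congr (fun s hs => hwu s hs.2) (hwu t le_rfl)
    have h2 : HasDerivWithinAt w (F (w t)) (Icc t c) t := by
      rw [hwv t le_rfl]
      exact (hv t ⟨le_rfl, hbc⟩).congr (fun s hs => hwv s hs.1) (hwv t le_rfl)
    have := h1.union h2
    rwa [Icc_union_Icc_eq_Icc hab hbc] at this
  · -- b < t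
    have htbc : t ∈ Icc b c := ⟨h.le, ht.2⟩
    have hev : w =ᶠ[nhdsWithin t (Icc b c)] v :=
      Filter.mem_of_superset (nhdsWithin_le_nhds (Ici_mem_nhds h)) fun s hs => hwv s hs
    have h1 : HasDerivWithinAt w (F (w t)) (Icc b c) t := by
      rw [hwv t h.le]
      exact (hv t htbc).congr_of_eventuallyEq hev (hwv t h.le)
    refine (hasDerivWithinAt_inter (Ioi_mem_nhds h)).mp ?_
    exact h1.mono fun s hs => ⟨hs.2.le, hs.1.2⟩

lemma solOnIcc (hL : LipschitzWith L F) :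
    ∀ (n : ℕ) (a b t₀ : ℝ) (x₀ : E), t₀ ∈ Icc a b →
      b - a ≤ (n + 1) * (2 * ((L : ℝ) + 1))⁻¹ →
    ∃ u : ℝ → E, u t₀ = x₀ ∧ ∀ t ∈ Icc a b, HasDerivWithinAt u (F (u t)) (Icc a b) t := by
  intro n
  induction n with
  | zero =>
    intro a b t₀ x₀ ht hlen
    exact localSol hL x₀ ht (by simpa using hlen)
  | succ n ih =>
    intro a b t₀ x₀ ht hlen
    set ε := (2 * ((L : ℝ) + 1))⁻¹ with hε
    have hε0 : 0 < ε := by positivity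
    by_cases hcase : b - a ≤ (n + 1) * ε
    · exact ih a b t₀ x₀ ht hcase
    push_neg at hcase
    set m := b - ε with hm
    have hne : (0:ℝ) ≤ (n:ℝ) := Nat.cast_nonneg n
    have ham : a ≤ m := by nlinarith
    have hmb : m ≤ b := by linarith
    have hlen2 : m - a ≤ ((n:ℝ) + 1) * ε := by
      push_cast at hlen
      simp only [hm]
      linarith
    by_cases hcase2 : t₀ ≤ m
    · obtain ⟨u, hu0, hu⟩ := ih a m t₀ x₀ ⟨ht.1, hcase2⟩ hlen2
      obtain ⟨v, hv0, hv⟩ := localSol hL (u m) (left_mem_Icc.mpr hmb)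
        (by have : b - m = ε := by rw [hm]; ring
            rw [this])
      obtain ⟨w, hw1, hw2, hw⟩ := pasteSol ham hmb hu hv hv0.symm
      exact ⟨w, by rw [hw1 t₀ hcase2, hu0], hw⟩
    · push_neg at hcase2
      obtain ⟨v, hv0, hv⟩ := localSol hL x₀ ⟨hcase2.le, ht.2⟩
        (by have : b - m = ε := by rw [hm]; ring
            rw [this])
      obtain ⟨u, hu0, hu⟩ := ih a m m (v m) ⟨ham, le_rfl⟩ hlen2
      obtain ⟨w, hw1, hw2, hw⟩ := pasteSol ham hmb hu hv hu0
      exact ⟨w, by rw [hw2 t₀ hcase2.le, hv0], hw⟩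

theorem globalODE (hL : LipschitzWith L F) (u₀ : E) :
    ∃! u : ℝ → E, u 0 = u₀ ∧ ∀ t : ℝ, HasDerivAt u (F (u t)) t := by
  classical
  set ε := (2 * ((L : ℝ) + 1))⁻¹ with hε
  have hε0 : 0 < ε := by positivity
  have hex : ∀ n : ℕ, ∃ u : ℝ → E, u 0 = u₀ ∧
      ∀ t ∈ Icc (-(((n:ℝ) + 1) * ε)) (((n:ℝ) + 1) * ε),
        HasDerivWithinAt u (F (u t)) (Icc (-(((n:ℝ) + 1) * ε)) (((n:ℝ) + 1) * ε)) t := by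
    intro n
    have hb : (0:ℝ) < ((n:ℝ) + 1) * ε := by positivity
    refine solOnIcc hL (2 * n + 1) _ _ 0 u₀ ⟨by linarith, hb.le⟩ ?_
    push_cast
    nlinarith [hε0, (Nat.cast_nonneg n : (0:ℝ) ≤ (n:ℝ))]
  choose U hU0 hU using hex
  have hagree : ∀ n m : ℕ, ∀ s : ℝ, |s| ≤ ((min n m : ℕ) + 1) * ε → U n s = U m s := by
    intro n m s hs
    set k := (((min n m : ℕ) : ℝ) + 1) * ε with hk
    have hk0 : 0 < k := by positivity
    have hkn : k ≤ ((n:ℝ) + 1) * ε := by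
      have : ((min n m : ℕ) : ℝ) ≤ (n : ℝ) := Nat.cast_le.mpr (Nat.min_le_left n m)
      nlinarith
    have hkm : k ≤ ((m:ℝ) + 1) * ε := by
      have : ((min n m : ℕ) : ℝ) ≤ (m : ℝ) := Nat.cast_le.mpr (Nat.min_le_right n m)
      nlinarith
    have hsub : ∀ j : ℕ, k ≤ ((j:ℝ) + 1) * ε → Icc (-k) k ⊆
        Icc (-(((j:ℝ) + 1) * ε)) (((j:ℝ) + 1) * ε) :=
      fun j hj => Icc_subset_Icc (by linarith) hj
    have hcont : ∀ j : ℕ, k ≤ ((j:ℝ) + 1) * ε → ContinuousOn (U j) (Icc (-k) k) := by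
      intro j hj t ht
      exact ((hU j t (hsub j hj ht)).continuousWithinAt).mono (hsub j hj)
    have hderiv : ∀ j : ℕ, k ≤ ((j:ℝ) + 1) * ε →
        ∀ t ∈ Ioo (-k) k, HasDerivAt (U j) (F (U j t)) t := by
      intro j hj t ht
      have ht' : t ∈ Icc (-(((j:ℝ) + 1) * ε)) (((j:ℝ) + 1) * ε) :=
        hsub j hj (Ioo_subset_Icc_self ht)
      exact (hU j t ht').hasDerivAt
        (Icc_mem_nhds (by linarith [ht.1]) (by linarith [ht.2]))
    have key : EqOn (U n) (U m) (Icc (-k) k) := by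
      refine ODE_solution_unique_of_mem_Icc (v := fun _ x => F x) (s := fun _ => univ)
        (fun _ _ => hL.lipschitzOnWith) (t₀ := 0) ⟨by linarith, hk0⟩
        (hcont n hkn) (hderiv n hkn) (fun _ _ => trivial)
        (hcont m hkm) (hderiv m hkm) (fun _ _ => trivial) ?_
      rw [hU0 n, hU0 m]
    have := abs_le.mp hs
    exact key ⟨this.1, this.2⟩
  set u : ℝ → E := fun t => U ⌈|t| / ε⌉₊ t with hudef
  have hbound : ∀ s : ℝ, |s| ≤ ((⌈|s| / ε⌉₊ : ℝ) + 1) * ε := by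
    intro s
    have h1 : |s| / ε ≤ (⌈|s| / ε⌉₊ : ℝ) := Nat.le_ceil _
    have h2 : |s| ≤ (⌈|s| / ε⌉₊ : ℝ) * ε := by
      rw [div_le_iff₀ hε0] at h1; exact h1
    nlinarith
  have hu0 : u 0 = u₀ := by
    have : (⌈|(0:ℝ)| / ε⌉₊ : ℕ) = 0 := by simp
    simp only [hudef, this, hU0]
  have hud : ∀ t : ℝ, HasDerivAt u (F (u t)) t := by
    intro t
    set n := ⌈|t| / ε⌉₊ with hn
    have hint : |t| + ε ≤ ((n:ℝ) + 1) * ε := by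
      have h1 : |t| / ε ≤ (n : ℝ) := Nat.le_ceil _
      have h2 : |t| ≤ (n : ℝ) * ε := by rw [div_le_iff₀ hε0] at h1; exact h1
      nlinarith
    have hmem : t ∈ Ioo (-(((n:ℝ) + 1) * ε)) (((n:ℝ) + 1) * ε) := by
      have := abs_lt.mp (show |t| < ((n:ℝ) + 1) * ε by linarith)
      exact ⟨this.1, this.2⟩
    have hopen : Ioo (-(((n:ℝ) + 1) * ε)) (((n:ℝ) + 1) * ε) ∈ nhds t :=
      Ioo_mem_nhds hmem.1 hmem.2
    have hloc : u =ᶠ[nhds t] U n := by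
      refine Filter.mem_of_superset hopen fun s hs => ?_
      have h2 : |s| ≤ ((n:ℝ) + 1) * ε := by
        have := abs_lt.mpr ⟨hs.1, hs.2⟩
        exact this.le
      show U ⌈|s| / ε⌉₊ s = U n s
      have h1 : |s| ≤ ((⌈|s| / ε⌉₊ : ℝ) + 1) * ε := hbound s
      refine hagree _ n s ?_
      rcases min_cases (⌈|s| / ε⌉₊) n with ⟨hmin, _⟩ | ⟨hmin, _⟩ <;> rw [hmin]
      · exact h1
      · exact h2
    have hmem' : t ∈ Icc (-(((n:ℝ) + 1) * ε)) (((n:ℝ) + 1) * ε) := Ioo_subset_Icc_self hmem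
    have hd : HasDerivAt (U n) (F (U n t)) t :=
      (hU n t hmem').hasDerivAt (Icc_mem_nhds hmem.1 hmem.2)
    have : HasDerivAt u (F (U n t)) t := hd.congr_of_eventuallyEq hloc
    have hut : u t = U n t := hloc.self_of_nhds
    rwa [← hut] at this
  refine ⟨u, ⟨hu0, hud⟩, ?_⟩
  rintro g ⟨hg0, hgd⟩
  funext t
  have h1 : (0:ℝ) ∈ Ioo (-(|t| + 1)) (|t| + 1) := by
    constructor
    · have := abs_nonneg t; linarith
    · have := abs_nonneg t; linarith
  have key : EqOn g u (Icc (-(|t| + 1)) (|t| + 1)) := by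
    refine ODE_solution_unique_of_mem_Icc (v := fun _ x => F x) (s := fun _ => univ)
      (fun _ _ => hL.lipschitzOnWith) h1
      (fun s _ => (hgd s).continuousAt.continuousWithinAt)
      (fun s _ => hgd s) (fun _ _ => trivial)
      (fun s _ => (hud s).continuousAt.continuousWithinAt)
      (fun s _ => hud s) (fun _ _ => trivial) (by rw [hg0, hu0])
  exact key ⟨by linarith [neg_abs_le t], by linarith [le_abs_self t]⟩

end ODE


theorem stmt4aux (N : ℕ) (hN : 1 ≤ N) (p : ℝ≥0∞) (hp1 : 1 < p) (hp2 : p ≠ ∞)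
    [Fact (1 ≤ p)]
    (h : ℝ) (hh : 0 < h)
    (f : ℝ → ℝ) (k₁ : ℝ) (hk₁ : 0 < k₁)
    (hf : ∀ x y : ℝ, |f x - f y| ≤ k₁ * |x - y|)
    (J : EuclideanSpace ℝ (Fin N) → ℝ)
    (hJmeas : Measurable J) (hJnn : ∀ x, 0 ≤ J x)
    (hJbdd : ∃ M : ℝ, ∀ x, |J x| ≤ M)
    (hJsupp : ∀ x, J x ≠ 0 → ‖x‖ ≤ 1)
    (ρ : EuclideanSpace ℝ (Fin N) → ℝ)
    (hρpos : ∀ x, 0 < ρ x) (hρint : Integrable ρ)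
    (hρeven : ∀ x, ρ (-x) = ρ x) (hρ1 : ∫ x, ρ x = 1)
    (K : ℝ) (hK : 0 < K)
    (hH2 : ∀ y x : EuclideanSpace ℝ (Fin N), dist x y ≤ 1 → ρ x ≤ K * ρ y)
    (μ : Measure (EuclideanSpace ℝ (Fin N)))
    (hμ : μ = volume.withDensity fun x => ENNReal.ofReal (ρ x))
    (F : Lp ℝ p μ → Lp ℝ p μ)
    (hF : ∀ v : Lp ℝ p μ,
      ⇑(F v) =ᵐ[μ] fun x => -(v : EuclideanSpace ℝ (Fin N) → ℝ) x
        + (∫ y, J (x - y) * f ((v : EuclideanSpace ℝ (Fin N) → ℝ) y)) + h) :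
    ∃ L : ℝ≥0, LipschitzWith L F := by
  obtain ⟨M, hM⟩ := hJbdd
  have hM0 : 0 ≤ M := le_trans (abs_nonneg _) (hM 0)
  -- exponent facts
  set q := p.toReal with hqdef
  have hq1 : 1 < q := by
    have := ENNReal.toReal_strict_mono hp2 hp1
    simpa using this
  have hq0 : 0 < q := lt_trans one_pos hq1
  have hqne : q ≠ 0 := hq0.ne'
  have hpne0 : p ≠ 0 := by positivity
  set q' := Real.conjExponent q with hq'def
  have hconj : q.HolderConjugate q' := Real.HolderConjugate.conjExponent hq1
  have hq'0 : 0 < q' := hconj.symm.pos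
  have hexp : 1 / q' * q = q - 1 := by
    have h1 := hconj.div_conj_eq_sub_one
    rw [div_eq_mul_inv] at h1
    rw [← h1]; ring
  -- measurable version of the density
  have hρaem : AEMeasurable ρ volume := hρint.aemeasurable
  set ρm := hρaem.mk ρ with hρmdef
  have hρm : Measurable ρm := hρaem.measurable_mk
  have hρae : ρ =ᵐ[volume] ρm := hρaem.ae_eq_mk
  have hdae : (fun x => ENNReal.ofReal (ρ x)) =ᵐ[volume] fun x => ENNReal.ofReal (ρm x) :=
    hρae.mono fun x hx => by dsimp only; rw [hx]
  have hμ' : μ = volume.withDensity fun x => ENNReal.ofReal (ρm x) := by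
    rw [hμ]; exact withDensity_congr_ae hdae
  -- absolute continuity both ways
  have hμvol : μ ≪ volume := by rw [hμ]; exact withDensity_absolutelyContinuous _ _
  have hvolμ : volume ≪ μ := by
    rw [hμ]
    exact withDensity_absolutelyContinuous' (by fun_prop)
      (Filter.Eventually.of_forall fun x => (ENNReal.ofReal_pos.mpr (hρpos x)).ne')
  -- ball volume
  haveI : Nonempty (Fin N) := Fin.pos_iff_nonempty.mp hN
  set c := volume (closedBall (0 : EuclideanSpace ℝ (Fin N)) 1) with hcdef
  have hcball : ∀ x : EuclideanSpace ℝ (Fin N), volume (closedBall x 1) = c := by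
    intro x; rw [hcdef]; exact Measure.addHaar_closedBall_center volume x 1
  have hcfin : c ≠ ∞ := measure_closedBall_lt_top.ne
  -- facts about f
  have hfc : Continuous f := by
    have : LipschitzWith k₁.toNNReal f := by
      apply LipschitzWith.of_dist_le_mul
      intro a b
      rw [Real.dist_eq, Real.dist_eq, Real.coe_toNNReal _ hk₁.le]
      exact hf a b
    exact this.continuous
  have hfb : ∀ r : ℝ, |f r| ≤ |f 0| + k₁ * |r| := by
    intro r
    have h1 : |f r - f 0| ≤ k₁ * |r| := by simpa using hf r 0
    have h2 : |f r| ≤ |f 0| + |f r - f 0| := by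
      calc |f r| = |f 0 + (f r - f 0)| := by congr 1; ring
        _ ≤ |f 0| + |f r - f 0| := abs_add_le _ _
    linarith
  -- per-function measurability and integrability facts
  have haesm : ∀ v : Lp ℝ p μ, AEStronglyMeasurable (⇑v) volume :=
    fun v => (Lp.aestronglyMeasurable v).mono_ac hvolμ
  have hlpfin : ∀ v : Lp ℝ p μ, ∫⁻ y, (‖v y‖₊ : ℝ≥0∞) ^ q ∂μ < ∞ := by
    intro v
    have h1 := (Lp.memLp v).2
    rw [eLpNorm_eq_lintegral_rpow_enorm_toReal hpne0 hp2] at h1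
    exact (ENNReal.rpow_lt_top_iff_of_pos (by positivity : (0:ℝ) < 1/q)).mp h1
  have hrpowμ : ∀ v : Lp ℝ p μ, AEMeasurable (fun y => (‖v y‖₊ : ℝ≥0∞) ^ q) μ :=
    fun v => (ENNReal.continuous_rpow_const.measurable.comp_aemeasurable
      (Lp.aestronglyMeasurable v).enorm)
  have hμint : ∀ g : EuclideanSpace ℝ (Fin N) → ℝ≥0∞, AEMeasurable g μ →
      ∫⁻ y, g y ∂μ = ∫⁻ y, ENNReal.ofReal (ρ y) * g y ∂volume := by
    intro g hg
    rw [hμ] at hg ⊢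
    exact lintegral_withDensity_eq_lintegral_mul₀' (by fun_prop) hg
  have hvint : ∀ (v : Lp ℝ p μ) (x : EuclideanSpace ℝ (Fin N)),
      IntegrableOn (⇑v) (closedBall x 1) volume := by
    intro v x
    haveI : IsFiniteMeasure (volume.restrict (closedBall x 1)) :=
      ⟨by rw [Measure.restrict_apply_univ]; exact measure_closedBall_lt_top⟩
    have hρx0 : ENNReal.ofReal (ρ x) ≠ 0 := (ENNReal.ofReal_pos.mpr (hρpos x)).ne'
    have hmem : MemLp (⇑v) p (volume.restrict (closedBall x 1)) := by
      refine ⟨(haesm v).restrict, ?_⟩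
      rw [eLpNorm_eq_lintegral_rpow_enorm_toReal hpne0 hp2]
      refine ENNReal.rpow_lt_top_of_nonneg (by positivity) (LT.lt.ne ?_)
      have h1 : ∀ᵐ y ∂(volume.restrict (closedBall x 1)),
          (‖v y‖₊ : ℝ≥0∞) ^ q ≤ (ENNReal.ofReal (ρ x))⁻¹ * ENNReal.ofReal K *
            (ENNReal.ofReal (ρ y) * (‖v y‖₊ : ℝ≥0∞) ^ q) := by
        filter_upwards [ae_restrict_mem measurableSet_closedBall] with y hy
        have h2 : ENNReal.ofReal (ρ x) ≤ ENNReal.ofReal K * ENNReal.ofReal (ρ y) := by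
          rw [← ENNReal.ofReal_mul hK.le]
          exact ENNReal.ofReal_le_ofReal (hH2 y x (dist_comm x y ▸ mem_closedBall.mp hy))
        have h3 : (1 : ℝ≥0∞) ≤ (ENNReal.ofReal (ρ x))⁻¹ * (ENNReal.ofReal K * ENNReal.ofReal (ρ y)) := by
          rw [← ENNReal.inv_mul_cancel hρx0 ENNReal.ofReal_ne_top]
          exact mul_le_mul_right h2 _
        calc (‖v y‖₊ : ℝ≥0∞) ^ q = 1 * (‖v y‖₊ : ℝ≥0∞) ^ q := (one_mul _).symm
          _ ≤ ((ENNReal.ofReal (ρ x))⁻¹ * (ENNReal.ofReal K * ENNReal.ofReal (ρ y)))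
              * (‖v y‖₊ : ℝ≥0∞) ^ q := mul_le_mul_left h3 _
          _ = (ENNReal.ofReal (ρ x))⁻¹ * ENNReal.ofReal K *
              (ENNReal.ofReal (ρ y) * (‖v y‖₊ : ℝ≥0∞) ^ q) := by ring
      calc ∫⁻ y in closedBall x 1, (‖v y‖₊ : ℝ≥0∞) ^ q ∂volume
          ≤ ∫⁻ y in closedBall x 1, (ENNReal.ofReal (ρ x))⁻¹ * ENNReal.ofReal K *
              (ENNReal.ofReal (ρ y) * (‖v y‖₊ : ℝ≥0∞) ^ q) ∂volume := lintegral_mono_ae h1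
        _ = (ENNReal.ofReal (ρ x))⁻¹ * ENNReal.ofReal K *
              ∫⁻ y in closedBall x 1, ENNReal.ofReal (ρ y) * (‖v y‖₊ : ℝ≥0∞) ^ q ∂volume := by
            rw [lintegral_const_mul' _ _ (ENNReal.mul_ne_top
              (ENNReal.inv_ne_top.mpr hρx0) ENNReal.ofReal_ne_top)]
        _ ≤ (ENNReal.ofReal (ρ x))⁻¹ * ENNReal.ofReal K *
              ∫⁻ y, ENNReal.ofReal (ρ y) * (‖v y‖₊ : ℝ≥0∞) ^ q ∂volume :=
            mul_le_mul_right (setLIntegral_le_lintegral _ _) _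
        _ < ∞ := by
            rw [← hμint _ (hrpowμ v)]
            exact ENNReal.mul_lt_top (ENNReal.mul_ne_top
              (ENNReal.inv_ne_top.mpr hρx0) ENNReal.ofReal_ne_top).lt_top (hlpfin v)
    exact hmem.integrable hp1.le
  have hJzero : ∀ x y : EuclideanSpace ℝ (Fin N), y ∉ closedBall x 1 → J (x - y) = 0 := by
    intro x y hy
    by_contra hne
    apply hy
    rw [mem_closedBall, dist_comm, dist_eq_norm]
    exact hJsupp _ hne
  have hJint : ∀ (v : Lp ℝ p μ) (x : EuclideanSpace ℝ (Fin N)),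
      Integrable (fun y => J (x - y) * f (v y)) volume := by
    intro v x
    have haes : AEStronglyMeasurable (fun y => J (x - y) * f (v y)) volume := by
      have h1 : Measurable (fun y : EuclideanSpace ℝ (Fin N) => J (x - y)) :=
        hJmeas.comp (measurable_const.sub measurable_id)
      exact h1.aestronglyMeasurable.mul (hfc.comp_aestronglyMeasurable (haesm v))
    have hgint : Integrable
        ((closedBall x 1).indicator (fun y => M * (|f 0| + k₁ * |v y|))) volume := by
      rw [integrable_indicator_iff measurableSet_closedBall]
      apply Integrable.const_mul
      exact (integrableOn_const measure_closedBall_lt_top.ne).add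
        ((hvint v x).abs.const_mul k₁)
    refine hgint.mono' haes (Filter.Eventually.of_forall fun y => ?_)
    by_cases hy : y ∈ closedBall x 1
    · rw [indicator_of_mem hy]
      rw [Real.norm_eq_abs, abs_mul]
      have h2 : |v y| = |v y| := rfl
      calc |J (x - y)| * |f (v y)| ≤ M * (|f 0| + k₁ * |v y|) :=
        mul_le_mul (hM _) (hfb (v y)) (abs_nonneg _) hM0
        _ = M * (|f 0| + k₁ * |v y|) := rfl
    · rw [indicator_of_notMem hy, hJzero x y hy]
      simp
  -- the key operator bound
  have hcq1 : c ^ (q - 1) ≠ ∞ := (ENNReal.rpow_lt_top_of_nonneg (by linarith) hcfin).ne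
  have hT : ∀ ψ : EuclideanSpace ℝ (Fin N) → ℝ≥0∞, Measurable ψ →
      ∫⁻ x, (∫⁻ y in closedBall x 1, ψ y) ^ q ∂μ ≤
        (c ^ (q - 1) * (ENNReal.ofReal K * c)) * ∫⁻ y, ψ y ^ q ∂μ := by
    intro ψ hψ
    set g : EuclideanSpace ℝ (Fin N) × EuclideanSpace ℝ (Fin N) → ℝ≥0∞ :=
      fun z => if dist z.2 z.1 ≤ 1 then ψ z.2 else 0 with hgdef
    have hgmeas : Measurable g := by
      apply Measurable.ite ?_ (hψ.comp measurable_snd) measurable_const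
      exact measurableSet_le
        (measurable_dist.comp (measurable_snd.prodMk measurable_fst)) measurable_const
    have hgoff : ∀ x y, y ∉ closedBall x 1 → g (x, y) = 0 := by
      intro x y hy
      rw [hgdef]
      exact if_neg fun hd => hy (mem_closedBall.mpr hd)
    have hstep0 : ∀ x, ∫⁻ y in closedBall x 1, ψ y ∂volume = ∫⁻ y, g (x, y) ∂volume := by
      intro x
      rw [← lintegral_indicator measurableSet_closedBall]
      apply lintegral_congr
      intro y
      by_cases hy : y ∈ closedBall x 1
      · rw [indicator_of_mem hy, hgdef]
        exact (if_pos (mem_closedBall.mp hy)).symm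
      · rw [indicator_of_notMem hy, hgoff x y hy]
    have hgq : ∀ x y, g (x, y) ^ q = if dist y x ≤ 1 then ψ y ^ q else 0 := by
      intro x y
      rw [hgdef]
      by_cases hd : dist y x ≤ 1
      · simp only [if_pos hd]
      · simp only [if_neg hd]
        exact ENNReal.zero_rpow_of_pos hq0
    -- Hölder pointwise
    have hstep1 : ∀ x, (∫⁻ y, g (x, y) ∂volume) ^ q ≤
        c ^ (q - 1) * ∫⁻ y, g (x, y) ^ q ∂volume := by
      intro x
      have hprod : ∀ y, ((closedBall x 1).indicator (fun _ => (1 : ℝ≥0∞)) y) * g (x, y)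
          = g (x, y) := by
        intro y
        by_cases hy : y ∈ closedBall x 1
        · rw [indicator_of_mem hy, one_mul]
        · rw [indicator_of_notMem hy, hgoff x y hy, mul_zero]
      have hholder := ENNReal.lintegral_mul_le_Lp_mul_Lq volume hconj.symm
        ((measurable_one.indicator measurableSet_closedBall).aemeasurable :
          AEMeasurable ((closedBall x 1).indicator (fun _ => (1 : ℝ≥0∞))) volume)
        ((hgmeas.comp measurable_prodMk_left).aemeasurable :
          AEMeasurable (fun y => g (x, y)) volume)
      have hind : ∫⁻ y, ((closedBall x 1).indicator (fun _ => (1 : ℝ≥0∞)) y) ^ q' ∂volume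
          = c := by
        have heq : ∀ y, ((closedBall x 1).indicator (fun _ => (1 : ℝ≥0∞)) y) ^ q'
            = (closedBall x 1).indicator (fun _ => (1 : ℝ≥0∞)) y := by
          intro y
          by_cases hy : y ∈ closedBall x 1 <;>
            simp [hy, ENNReal.zero_rpow_of_pos hq'0]
        rw [lintegral_congr heq, lintegral_indicator_const measurableSet_closedBall, one_mul, hcball]
      have hh2 : ∫⁻ y, g (x, y) ∂volume ≤
          c ^ (1 / q') * (∫⁻ y, g (x, y) ^ q ∂volume) ^ (1 / q) := by
        calc ∫⁻ y, g (x, y) ∂volume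
            = ∫⁻ y, ((closedBall x 1).indicator (fun _ => (1 : ℝ≥0∞)) * fun y => g (x, y)) y
              ∂volume := (lintegral_congr hprod).symm
          _ ≤ (∫⁻ y, ((closedBall x 1).indicator (fun _ => (1 : ℝ≥0∞)) y) ^ q' ∂volume) ^ (1 / q')
              * (∫⁻ y, g (x, y) ^ q ∂volume) ^ (1 / q) := hholder
          _ = c ^ (1 / q') * (∫⁻ y, g (x, y) ^ q ∂volume) ^ (1 / q) := by rw [hind]
      calc (∫⁻ y, g (x, y) ∂volume) ^ q
          ≤ (c ^ (1 / q') * (∫⁻ y, g (x, y) ^ q ∂volume) ^ (1 / q)) ^ q :=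
            ENNReal.rpow_le_rpow hh2 hq0.le
        _ = c ^ (q - 1) * ∫⁻ y, g (x, y) ^ q ∂volume := by
            rw [ENNReal.mul_rpow_of_nonneg _ _ hq0.le, ← ENNReal.rpow_mul,
              ← ENNReal.rpow_mul, hexp, one_div, inv_mul_cancel₀ hqne, ENNReal.rpow_one]
    -- measurability of the inner integral
    have hGmeas : Measurable fun x => ∫⁻ y, g (x, y) ∂volume :=
      hgmeas.lintegral_prod_right'
    have hGq : Measurable fun x => (∫⁻ y, g (x, y) ∂volume) ^ q :=
      ENNReal.continuous_rpow_const.measurable.comp hGmeas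
    have hGq2 : Measurable fun z : EuclideanSpace ℝ (Fin N) × EuclideanSpace ℝ (Fin N)
        => g z ^ q := ENNReal.continuous_rpow_const.measurable.comp hgmeas
    -- rewrite the μ-integral via the density
    have hstep2 : ∫⁻ x, (∫⁻ y in closedBall x 1, ψ y ∂volume) ^ q ∂μ ≤
        c ^ (q - 1) * ∫⁻ x, ∫⁻ y, ENNReal.ofReal (ρ x) * g (x, y) ^ q ∂volume ∂volume := by
      have e1 : ∫⁻ x, (∫⁻ y in closedBall x 1, ψ y ∂volume) ^ q ∂μ
          = ∫⁻ x, ENNReal.ofReal (ρ x) * (∫⁻ y, g (x, y) ∂volume) ^ q ∂volume := by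
        rw [hμint _ (by simp_rw [hstep0]; exact hGq.aemeasurable)]
        apply lintegral_congr
        intro x
        rw [hstep0]
      rw [e1]
      have e2 : ∀ x, ENNReal.ofReal (ρ x) * (∫⁻ y, g (x, y) ∂volume) ^ q ≤
          c ^ (q - 1) * ∫⁻ y, ENNReal.ofReal (ρ x) * g (x, y) ^ q ∂volume := by
        intro x
        rw [lintegral_const_mul' _ _ ENNReal.ofReal_ne_top]
        calc ENNReal.ofReal (ρ x) * (∫⁻ y, g (x, y) ∂volume) ^ q
            ≤ ENNReal.ofReal (ρ x) * (c ^ (q - 1) * ∫⁻ y, g (x, y) ^ q ∂volume) :=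
              mul_le_mul_right (hstep1 x) _
          _ = c ^ (q - 1) * (ENNReal.ofReal (ρ x) * ∫⁻ y, g (x, y) ^ q ∂volume) := by ring
      calc ∫⁻ x, ENNReal.ofReal (ρ x) * (∫⁻ y, g (x, y) ∂volume) ^ q ∂volume
          ≤ ∫⁻ x, c ^ (q - 1) * ∫⁻ y, ENNReal.ofReal (ρ x) * g (x, y) ^ q ∂volume ∂volume :=
            lintegral_mono e2
        _ = c ^ (q - 1) * ∫⁻ x, ∫⁻ y, ENNReal.ofReal (ρ x) * g (x, y) ^ q ∂volume ∂volume :=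
            lintegral_const_mul' _ _ hcq1
    -- swap the integrals (with the measurable version of ρ)
    have hswapcongr : ∫⁻ x, ∫⁻ y, ENNReal.ofReal (ρ x) * g (x, y) ^ q ∂volume ∂volume
        = ∫⁻ x, ∫⁻ y, ENNReal.ofReal (ρm x) * g (x, y) ^ q ∂volume ∂volume := by
      apply lintegral_congr_ae
      filter_upwards [hρae] with x hx
      rw [hx]
    have hswap : ∫⁻ x, ∫⁻ y, ENNReal.ofReal (ρm x) * g (x, y) ^ q ∂volume ∂volume
        = ∫⁻ y, ∫⁻ x, ENNReal.ofReal (ρm x) * g (x, y) ^ q ∂volume ∂volume := by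
      apply lintegral_lintegral_swap
      exact (((hρm.ennreal_ofReal).comp measurable_fst).mul hGq2).aemeasurable
    -- bound the inner x-integral
    have hstep4 : ∀ y, ∫⁻ x, ENNReal.ofReal (ρm x) * g (x, y) ^ q ∂volume ≤
        (ENNReal.ofReal K * c) * (ENNReal.ofReal (ρ y) * ψ y ^ q) := by
      intro y
      have hcongr : ∫⁻ x, ENNReal.ofReal (ρm x) * g (x, y) ^ q ∂volume
          = ∫⁻ x, ENNReal.ofReal (ρ x) * g (x, y) ^ q ∂volume := by
        apply lintegral_congr_ae
        filter_upwards [hρae] with x hx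
        rw [hx]
      rw [hcongr]
      have hpt : ∀ x, ENNReal.ofReal (ρ x) * g (x, y) ^ q ≤
          (closedBall y 1).indicator
            (fun _ => ENNReal.ofReal K * ENNReal.ofReal (ρ y) * ψ y ^ q) x := by
        intro x
        by_cases hd : dist y x ≤ 1
        · have hx : x ∈ closedBall y 1 := mem_closedBall.mpr (dist_comm y x ▸ hd)
          rw [indicator_of_mem hx, hgq, if_pos hd]
          have hρb : ENNReal.ofReal (ρ x) ≤ ENNReal.ofReal K * ENNReal.ofReal (ρ y) := by
            rw [← ENNReal.ofReal_mul hK.le]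
            exact ENNReal.ofReal_le_ofReal (hH2 y x (dist_comm x y ▸ hd))
          exact mul_le_mul_left hρb _
        · rw [hgq, if_neg hd, mul_zero]
          exact zero_le
      calc ∫⁻ x, ENNReal.ofReal (ρ x) * g (x, y) ^ q ∂volume
          ≤ ∫⁻ x, (closedBall y 1).indicator
              (fun _ => ENNReal.ofReal K * ENNReal.ofReal (ρ y) * ψ y ^ q) x ∂volume :=
            lintegral_mono hpt
        _ = ENNReal.ofReal K * ENNReal.ofReal (ρ y) * ψ y ^ q * volume (closedBall y 1) :=
            lintegral_indicator_const measurableSet_closedBall _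
        _ = (ENNReal.ofReal K * c) * (ENNReal.ofReal (ρ y) * ψ y ^ q) := by
            rw [hcball]; ring
    -- assemble
    have hψq : AEMeasurable (fun y => ψ y ^ q) μ :=
      (ENNReal.continuous_rpow_const.measurable.comp hψ).aemeasurable
    calc ∫⁻ x, (∫⁻ y in closedBall x 1, ψ y ∂volume) ^ q ∂μ
        ≤ c ^ (q - 1) * ∫⁻ x, ∫⁻ y, ENNReal.ofReal (ρ x) * g (x, y) ^ q ∂volume ∂volume :=
          hstep2
      _ = c ^ (q - 1) * ∫⁻ y, ∫⁻ x, ENNReal.ofReal (ρm x) * g (x, y) ^ q ∂volume ∂volume := by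
          rw [hswapcongr, hswap]
      _ ≤ c ^ (q - 1) * ∫⁻ y, (ENNReal.ofReal K * c) * (ENNReal.ofReal (ρ y) * ψ y ^ q)
            ∂volume := mul_le_mul_right (lintegral_mono hstep4) _
      _ = c ^ (q - 1) * ((ENNReal.ofReal K * c) *
            ∫⁻ y, ENNReal.ofReal (ρ y) * ψ y ^ q ∂volume) := by
          rw [lintegral_const_mul' _ _ (ENNReal.mul_ne_top ENNReal.ofReal_ne_top hcfin)]
      _ = (c ^ (q - 1) * (ENNReal.ofReal K * c)) * ∫⁻ y, ψ y ^ q ∂μ := by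
          rw [hμint _ hψq]; ring
  -- the Lipschitz constant
  set D : ℝ≥0∞ := ENNReal.ofReal (M * k₁) * (c ^ (q - 1) * (ENNReal.ofReal K * c)) ^ (1 / q)
    with hDdef
  have hDfin : D ≠ ∞ := by
    apply ENNReal.mul_ne_top ENNReal.ofReal_ne_top
    apply (ENNReal.rpow_lt_top_of_nonneg (by positivity) _).ne
    exact ENNReal.mul_ne_top (ENNReal.rpow_lt_top_of_nonneg (by linarith) hcfin).ne
      (ENNReal.mul_ne_top ENNReal.ofReal_ne_top hcfin)
  have hclaim : ∀ v w : Lp ℝ p μ, edist (F v) (F w) ≤ (1 + D) * edist v w := by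
    intro v w
    set Bd : EuclideanSpace ℝ (Fin N) → ℝ :=
      fun x => ∫ y, J (x - y) * (f (v y) - f (w y)) with hBddef
    have hBdeq : ∀ x, Bd x =
        (∫ y, J (x - y) * f (v y)) - ∫ y, J (x - y) * f (w y) := by
      intro x
      rw [hBddef]
      dsimp only
      rw [← integral_sub (hJint v x) (hJint w x)]
      congr 1
      funext y
      ring
    have hFvw : (⇑(F v) - ⇑(F w)) =ᵐ[μ] fun x => (w x - v x) + Bd x := by
      filter_upwards [hF v, hF w] with x h1 h2
      simp only [Pi.sub_apply, h1, h2, hBdeq x]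
      ring
    have hBaesm : AEStronglyMeasurable Bd μ := by
      have heq : Bd =ᵐ[μ] fun x => (⇑(F v) - ⇑(F w)) x + (v x - w x) := by
        filter_upwards [hFvw] with x hx
        rw [hx]
        ring
      exact (((Lp.aestronglyMeasurable (F v)).sub (Lp.aestronglyMeasurable (F w))).add
        ((Lp.aestronglyMeasurable v).sub (Lp.aestronglyMeasurable w))).congr heq.symm
    -- measurable version of the enorm of the difference
    have hvwaem : AEMeasurable (fun y => (‖v y - w y‖₊ : ℝ≥0∞)) volume :=
      ((haesm v).sub (haesm w)).enorm
    set ψ := hvwaem.mk _ with hψdef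
    have hψm : Measurable ψ := hvwaem.measurable_mk
    have hψae : (fun y => (‖v y - w y‖₊ : ℝ≥0∞)) =ᵐ[volume] ψ := hvwaem.ae_eq_mk
    have hBbound : ∀ x, (‖Bd x‖₊ : ℝ≥0∞) ≤
        ENNReal.ofReal (M * k₁) * ∫⁻ y in closedBall x 1, ψ y ∂volume := by
      intro x
      have h1 : (‖Bd x‖₊ : ℝ≥0∞) ≤
          ∫⁻ y, (‖J (x - y) * (f (v y) - f (w y))‖₊ : ℝ≥0∞) ∂volume :=
        enorm_integral_le_lintegral_enorm _
      have h2 : ∀ y, (‖J (x - y) * (f (v y) - f (w y))‖₊ : ℝ≥0∞) ≤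
          ENNReal.ofReal (M * k₁) *
            (closedBall x 1).indicator (fun y => (‖v y - w y‖₊ : ℝ≥0∞)) y := by
        intro y
        by_cases hy : y ∈ closedBall x 1
        · rw [indicator_of_mem hy]
          change ‖J (x - y) * (f (v y) - f (w y))‖ₑ ≤ ENNReal.ofReal (M * k₁) * ‖v y - w y‖ₑ
          rw [Real.enorm_eq_ofReal_abs, Real.enorm_eq_ofReal_abs,
            ← ENNReal.ofReal_mul (by positivity)]
          apply ENNReal.ofReal_le_ofReal
          rw [abs_mul]
          calc |J (x - y)| * |f (v y) - f (w y)| ≤ M * (k₁ * |v y - w y|) :=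
              mul_le_mul (hM _) (hf (v y) (w y)) (abs_nonneg _) hM0
            _ = M * k₁ * |v y - w y| := by ring
        · rw [indicator_of_notMem hy, hJzero x y hy]
          simp
      calc (‖Bd x‖₊ : ℝ≥0∞)
          ≤ ∫⁻ y, (‖J (x - y) * (f (v y) - f (w y))‖₊ : ℝ≥0∞) ∂volume := h1
        _ ≤ ∫⁻ y, ENNReal.ofReal (M * k₁) *
              (closedBall x 1).indicator (fun y => (‖v y - w y‖₊ : ℝ≥0∞)) y ∂volume :=
            lintegral_mono h2
        _ = ENNReal.ofReal (M * k₁) * ∫⁻ y,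
              (closedBall x 1).indicator (fun y => (‖v y - w y‖₊ : ℝ≥0∞)) y ∂volume :=
            lintegral_const_mul' _ _ ENNReal.ofReal_ne_top
        _ = ENNReal.ofReal (M * k₁) *
              ∫⁻ y in closedBall x 1, (‖v y - w y‖₊ : ℝ≥0∞) ∂volume := by
            rw [lintegral_indicator measurableSet_closedBall]
        _ = ENNReal.ofReal (M * k₁) * ∫⁻ y in closedBall x 1, ψ y ∂volume := by
            congr 1
            exact lintegral_congr_ae (ae_restrict_of_ae hψae)
    -- ψ^q integral equals the Lp distance integral
    have hψqint : ∫⁻ y, ψ y ^ q ∂μ = ∫⁻ y, (‖v y - w y‖₊ : ℝ≥0∞) ^ q ∂μ := by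
      apply lintegral_congr_ae
      filter_upwards [hψae.filter_mono hμvol.ae_le] with y hy
      rw [hy]
    have hedistvw : eLpNorm (⇑v - ⇑w) p μ = edist v w := (Lp.edist_def v w).symm
    have hEq2 : eLpNorm (fun x => w x - v x) p μ = edist v w := by
      rw [← hedistvw]
      exact eLpNorm_sub_comm _ _ _ _
    have hEq3 : eLpNorm Bd p μ ≤ D * edist v w := by
      rw [eLpNorm_eq_lintegral_rpow_enorm_toReal hpne0 hp2]
      have hMk : ENNReal.ofReal (M * k₁) ^ q ≠ ∞ :=
        (ENNReal.rpow_lt_top_of_nonneg hq0.le ENNReal.ofReal_ne_top).ne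
      have hfinal : ∫⁻ x, (‖Bd x‖₊ : ℝ≥0∞) ^ q ∂μ ≤
          ENNReal.ofReal (M * k₁) ^ q *
            ((c ^ (q - 1) * (ENNReal.ofReal K * c)) * ∫⁻ y, ψ y ^ q ∂μ) := by
        calc ∫⁻ x, (‖Bd x‖₊ : ℝ≥0∞) ^ q ∂μ
            ≤ ∫⁻ x, (ENNReal.ofReal (M * k₁) * ∫⁻ y in closedBall x 1, ψ y ∂volume) ^ q ∂μ :=
              lintegral_mono fun x => ENNReal.rpow_le_rpow (hBbound x) hq0.le
          _ = ENNReal.ofReal (M * k₁) ^ q *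
                ∫⁻ x, (∫⁻ y in closedBall x 1, ψ y ∂volume) ^ q ∂μ := by
              rw [← lintegral_const_mul' _ _ hMk]
              apply lintegral_congr
              intro x
              rw [ENNReal.mul_rpow_of_nonneg _ _ hq0.le]
          _ ≤ ENNReal.ofReal (M * k₁) ^ q *
                ((c ^ (q - 1) * (ENNReal.ofReal K * c)) * ∫⁻ y, ψ y ^ q ∂μ) :=
              mul_le_mul_right (hT ψ hψm) _
      calc (∫⁻ x, (‖Bd x‖₊ : ℝ≥0∞) ^ q ∂μ) ^ (1 / q)
          ≤ (ENNReal.ofReal (M * k₁) ^ q *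
              ((c ^ (q - 1) * (ENNReal.ofReal K * c)) * ∫⁻ y, ψ y ^ q ∂μ)) ^ (1 / q) :=
            ENNReal.rpow_le_rpow hfinal (by positivity)
        _ = D * (∫⁻ y, ψ y ^ q ∂μ) ^ (1 / q) := by
            rw [ENNReal.mul_rpow_of_nonneg _ _ (by positivity : (0:ℝ) ≤ 1 / q),
              ENNReal.mul_rpow_of_nonneg _ _ (by positivity : (0:ℝ) ≤ 1 / q),
              ← ENNReal.rpow_mul, mul_one_div, div_self hqne, ENNReal.rpow_one, hDdef]
            ring
        _ = D * edist v w := by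
            rw [hψqint, ← hedistvw, eLpNorm_eq_lintegral_rpow_enorm_toReal hpne0 hp2]
            simp only [Pi.sub_apply]
            rfl
    calc edist (F v) (F w) = eLpNorm (⇑(F v) - ⇑(F w)) p μ := Lp.edist_def _ _
      _ = eLpNorm (fun x => (w x - v x) + Bd x) p μ := eLpNorm_congr_ae hFvw
      _ ≤ eLpNorm (fun x => w x - v x) p μ + eLpNorm Bd p μ :=
          eLpNorm_add_le ((Lp.aestronglyMeasurable w).sub (Lp.aestronglyMeasurable v))
            hBaesm Fact.out
      _ ≤ edist v w + D * edist v w := by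
          rw [hEq2]
          exact add_le_add_right hEq3 _
      _ = (1 + D) * edist v w := by ring
  refine ⟨(1 + D).toNNReal, fun v w => ?_⟩
  rw [ENNReal.coe_toNNReal (by simp [hDfin])]
  exact hclaim v w

end Aux

/-- Under (H1) and (H2), the Cauchy problem for
`∂u/∂t = −u + J∗(f∘u) + h` is globally well posed in `L^p(ℝ^N, ρ)`: for any realization
`F : L^p → L^p` of the right-hand side `u ↦ −u + J∗(f∘u) + h` and every initial datum
`u₀`, there is a unique globally defined solution `u : ℝ → L^p(ℝ^N, ρ)` with `u(0) = u₀`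
and `u'(t) = F(u(t))` for every `t`. -/
theorem stmt_4 (N : ℕ) (hN : 1 ≤ N) (p : ℝ≥0∞) (hp1 : 1 < p) (hp2 : p ≠ ∞)
    [Fact (1 ≤ p)]
    (h : ℝ) (hh : 0 < h)
    (f : ℝ → ℝ) (k₁ : ℝ) (hk₁ : 0 < k₁)
    (hf : ∀ x y : ℝ, |f x - f y| ≤ k₁ * |x - y|)
    (J : EuclideanSpace ℝ (Fin N) → ℝ)
    (hJmeas : Measurable J) (hJnn : ∀ x, 0 ≤ J x)
    (hJbdd : ∃ M : ℝ, ∀ x, |J x| ≤ M)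
    (hJsupp : ∀ x, J x ≠ 0 → ‖x‖ ≤ 1)
    (ρ : EuclideanSpace ℝ (Fin N) → ℝ)
    (hρpos : ∀ x, 0 < ρ x) (hρint : Integrable ρ)
    (hρeven : ∀ x, ρ (-x) = ρ x) (hρ1 : ∫ x, ρ x = 1)
    (K : ℝ) (hK : 0 < K)
    (hH2 : ∀ y x : EuclideanSpace ℝ (Fin N), dist x y ≤ 1 → ρ x ≤ K * ρ y)
    (μ : Measure (EuclideanSpace ℝ (Fin N)))
    (hμ : μ = volume.withDensity fun x => ENNReal.ofReal (ρ x))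
    (F : Lp ℝ p μ → Lp ℝ p μ)
    (hF : ∀ v : Lp ℝ p μ,
      ⇑(F v) =ᵐ[μ] fun x => -(v : EuclideanSpace ℝ (Fin N) → ℝ) x
        + (∫ y, J (x - y) * f ((v : EuclideanSpace ℝ (Fin N) → ℝ) y)) + h) :
    ∀ u₀ : Lp ℝ p μ, ∃! u : ℝ → Lp ℝ p μ,
      u 0 = u₀ ∧ ∀ t : ℝ, HasDerivAt u (F (u t)) t := by
  intro u₀
  obtain ⟨L, hL⟩ := stmt4aux N hN p hp1 hp2 h hh f k₁ hk₁ hf J hJmeas hJnn hJbdd hJsupp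
    ρ hρpos hρint hρeven hρ1 K hK hH2 μ hμ F hF
  exact globalODE hL u₀
end

section
/- Let N ≥ 1, 1 < p < ∞, h > 0. Assume (H1), (H2) with constant K > 0, and (H3): |f(x)| ≤ a for all x ∈ ℝ, with a > 0. Let J be a nonnegative bounded measurable function supported in the closed unit ball, and set R = a K^{1/p} ‖J‖_{L¹} + h. If u : [0,∞) → L^p(ℝ^N, ρ) satisfies the variation of constants formula u(t) = e^{−t} u(0) + ∫₀^t e^{s−t} [J∗(f∘u(s)) + h] ds for all t ≥ 0, then ‖u(t)‖_{L^p(ℝ^N,ρ)} ≤ e^{−t} ‖u(0)‖_{L^p(ℝ^N,ρ)} + R for all t ≥ 0; consequently, for every ε > 0 and every t > ln(‖u(0)‖_{L^p(ℝ^N,ρ)}/ε) one has ‖u(t)‖_{L^p(ℝ^N,ρ)} < R + ε. -/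
open MeasureTheory Metric ENNReal

/-- Under (H1)-(H3), with `R = a K^{1/p} ‖J‖_{L¹} + h`, any solution of the
variation of constants formula `u(t) = e^{−t} u(0) + ∫₀ᵗ e^{s−t}[J∗(f∘u(s)) + h] ds` in
`L^p(ℝ^N, ρ)` satisfies `‖u(t)‖ ≤ e^{−t}‖u(0)‖ + R` for all `t ≥ 0`; consequently for
every `ε > 0` and every `t > ln(‖u(0)‖/ε)` one has `‖u(t)‖ < R + ε`. -/
theorem stmt_5 (N : ℕ) (hN : 1 ≤ N) (p : ℝ≥0∞) (hp1 : 1 < p) (hp2 : p ≠ ∞)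
    [Fact (1 ≤ p)]
    (h a k₁ K : ℝ) (hh : 0 < h) (ha : 0 < a) (hk₁ : 0 < k₁) (hK : 0 < K)
    (f : ℝ → ℝ) (hf : ∀ x y : ℝ, |f x - f y| ≤ k₁ * |x - y|)
    (hfa : ∀ x : ℝ, |f x| ≤ a)
    (J : EuclideanSpace ℝ (Fin N) → ℝ)
    (hJmeas : Measurable J) (hJnn : ∀ x, 0 ≤ J x)
    (hJbdd : ∃ M : ℝ, ∀ x, |J x| ≤ M)
    (hJsupp : ∀ x, J x ≠ 0 → ‖x‖ ≤ 1)
    (ρ : EuclideanSpace ℝ (Fin N) → ℝ)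
    (hρpos : ∀ x, 0 < ρ x) (hρint : Integrable ρ)
    (hρeven : ∀ x, ρ (-x) = ρ x) (hρ1 : ∫ x, ρ x = 1)
    (hH2 : ∀ y x : EuclideanSpace ℝ (Fin N), dist x y ≤ 1 → ρ x ≤ K * ρ y)
    (μ : Measure (EuclideanSpace ℝ (Fin N)))
    (hμ : μ = volume.withDensity fun x => ENNReal.ofReal (ρ x))
    (R : ℝ) (hR : R = a * K ^ (1 / p.toReal) * (∫ z, |J z|) + h)
    (u g : ℝ → Lp ℝ p μ)
    -- `g s` is (the class of) `J∗(f∘u(s)) + h`: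
    (hg : ∀ s : ℝ, ⇑(g s) =ᵐ[μ] fun x =>
      (∫ y, J (x - y) * f ((u s : EuclideanSpace ℝ (Fin N) → ℝ) y)) + h)
    -- variation of constants formula (Bochner integral in `L^p(ℝ^N, ρ)`):
    (hvoc : ∀ t : ℝ, 0 ≤ t →
      u t = Real.exp (-t) • u 0 + ∫ s in (0:ℝ)..t, Real.exp (s - t) • g s) :
    (∀ t : ℝ, 0 ≤ t → ‖u t‖ ≤ Real.exp (-t) * ‖u 0‖ + R) ∧
    ∀ ε : ℝ, 0 < ε → ∀ t : ℝ, 0 ≤ t → Real.log (‖u 0‖ / ε) < t → ‖u t‖ < R + ε := by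
  -- μ is a probability measure
  have hμuniv : μ Set.univ = 1 := by
    rw [hμ, withDensity_apply _ MeasurableSet.univ, Measure.restrict_univ,
      ← ofReal_integral_eq_lintegral_ofReal hρint
        (Filter.Eventually.of_forall fun x => (hρpos x).le), hρ1, ENNReal.ofReal_one]
  haveI : IsFiniteMeasure μ := ⟨by rw [hμuniv]; exact one_lt_top⟩
  have hmuniv : measureUnivNNReal μ = 1 := by
    simp [measureUnivNNReal, hμuniv]
  -- J is integrable
  obtain ⟨M, hM⟩ := hJbdd
  have hJint : Integrable J := by
    rw [← integrableOn_iff_integrable_of_support_subset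
      (s := closedBall (0 : EuclideanSpace ℝ (Fin N)) 1)
      (fun x hx => by simpa [mem_closedBall, dist_eq_norm] using hJsupp x hx)]
    exact Measure.integrableOn_of_bounded (measure_closedBall_lt_top).ne
      hJmeas.aestronglyMeasurable (Filter.Eventually.of_forall fun x => hM x)
  have hJabsnn : 0 ≤ ∫ z, |J z| := integral_nonneg fun z => abs_nonneg _
  have hK1 : (1 : ℝ) ≤ K := by
    have := hH2 0 0 (by simp)
    nlinarith [hρpos (0 : EuclideanSpace ℝ (Fin N))]
  have hptop : 0 < p.toReal := ENNReal.toReal_pos (by positivity) hp2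
  have hKp : (1 : ℝ) ≤ K ^ (1 / p.toReal) :=
    Real.one_le_rpow hK1 (by positivity)
  -- the constant bound on g
  set C : ℝ := a * (∫ z, |J z|) + h with hC
  have hC0 : 0 ≤ C := by positivity
  have hCR : C ≤ R := by
    rw [hR, hC]
    have h3 : a ≤ a * K ^ (1 / p.toReal) := le_mul_of_one_le_right ha.le hKp
    have := mul_le_mul_of_nonneg_right h3 hJabsnn
    linarith
  have hR0 : 0 < R := lt_of_lt_of_le (by positivity) hCR
  -- norm bound on g s
  have hgbdd : ∀ s : ℝ, ‖g s‖ ≤ R := by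
    intro s
    have hbd : ∀ᵐ x ∂μ, ‖(g s : EuclideanSpace ℝ (Fin N) → ℝ) x‖ ≤ C := by
      filter_upwards [hg s] with x hx
      rw [hx]
      have h1 : ‖∫ y, J (x - y) * f ((u s : EuclideanSpace ℝ (Fin N) → ℝ) y)‖
          ≤ ∫ y, |J (x - y)| * a := by
        refine norm_integral_le_of_norm_le
          (((hJint.abs.comp_sub_left x)).mul_const a) ?_
        refine Filter.Eventually.of_forall fun y => ?_
        rw [norm_mul, Real.norm_eq_abs, Real.norm_eq_abs]
        exact mul_le_mul_of_nonneg_left (hfa _) (abs_nonneg _)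
      have h2 : (∫ y, |J (x - y)| * a) = a * (∫ z, |J z|) := by
        rw [integral_mul_const, integral_sub_left_eq_self (fun y => |J y|) volume x,
          mul_comm]
      calc ‖(∫ y, J (x - y) * f ((u s : EuclideanSpace ℝ (Fin N) → ℝ) y)) + h‖
          ≤ ‖∫ y, J (x - y) * f ((u s : EuclideanSpace ℝ (Fin N) → ℝ) y)‖ + ‖h‖ :=
            norm_add_le _ _
        _ ≤ a * (∫ z, |J z|) + h := by
            rw [Real.norm_eq_abs h, abs_of_pos hh]
            exact add_le_add (h2 ▸ h1) le_rfl
    have := Lp.norm_le_of_ae_bound hC0 hbd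
    rw [hmuniv] at this
    simp only [NNReal.coe_one, Real.one_rpow, one_mul] at this
    exact this.trans hCR
  -- Main estimate
  have main : ∀ t : ℝ, 0 ≤ t → ‖u t‖ ≤ Real.exp (-t) * ‖u 0‖ + R := by
    intro t ht
    rw [hvoc t ht]
    have hIbd : ‖∫ s in (0:ℝ)..t, Real.exp (s - t) • g s‖ ≤ R := by
      have hb : IntervalIntegrable (fun s => Real.exp (s - t) * R) volume 0 t :=
        (((Real.continuous_exp.comp (continuous_id.sub continuous_const)).mul
          continuous_const).intervalIntegrable 0 t)
      have h1 : ‖∫ s in (0:ℝ)..t, Real.exp (s - t) • g s‖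
          ≤ |∫ s in (0:ℝ)..t, Real.exp (s - t) * R| := by
        refine intervalIntegral.norm_integral_le_abs_of_norm_le ?_ hb
        refine Filter.Eventually.of_forall fun s => ?_
        rw [norm_smul, Real.norm_eq_abs, abs_of_pos (Real.exp_pos _)]
        exact mul_le_mul_of_nonneg_left (hgbdd s) (Real.exp_pos _).le
      have h2 : (∫ s in (0:ℝ)..t, Real.exp (s - t) * R)
          = R * (1 - Real.exp (-t)) := by
        rw [intervalIntegral.integral_mul_const,
          intervalIntegral.integral_comp_sub_right (fun s => Real.exp s) t,
          integral_exp, zero_sub, sub_self, Real.exp_zero]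
        ring
      rw [h2] at h1
      refine h1.trans ?_
      rw [abs_of_nonneg]
      · nlinarith [Real.exp_pos (-t)]
      · nlinarith [Real.exp_pos (-t), Real.exp_le_one_iff.2 (neg_nonpos.2 ht)]
    calc ‖Real.exp (-t) • u 0 + ∫ s in (0:ℝ)..t, Real.exp (s - t) • g s‖
        ≤ ‖Real.exp (-t) • u 0‖ + ‖∫ s in (0:ℝ)..t, Real.exp (s - t) • g s‖ :=
          norm_add_le _ _
      _ ≤ Real.exp (-t) * ‖u 0‖ + R := by
          rw [norm_smul, Real.norm_eq_abs, abs_of_pos (Real.exp_pos _)]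
          exact add_le_add le_rfl hIbd
  refine ⟨main, fun ε hε t ht hlt => ?_⟩
  have hdecay : Real.exp (-t) * ‖u 0‖ < ε := by
    rcases eq_or_lt_of_le (norm_nonneg (u 0)) with h0 | h0
    · rw [← h0, mul_zero]; exact hε
    · have hpos : 0 < ‖u 0‖ / ε := div_pos h0 hε
      have := Real.exp_lt_exp.2 hlt
      rw [Real.exp_log hpos] at this
      rw [Real.exp_neg]
      rw [div_lt_iff₀ hε] at this
      rw [inv_mul_lt_iff₀ (Real.exp_pos t)]
      linarith [this]
  have := main t ht
  linarith
end

section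
/- Let N ≥ 1, 1 < p < ∞, h > 0. Assume (H1), (H2) with constant K, (H3) with bound a, and (H4) with constant S, and set R = a K^{1/p} ‖J‖_{L¹} + h. Fix ε > 0. Then for every η > 0 there exists t_η > 0 such that the set { u(t_η) : u : [0,∞) → L^p(ℝ^N, ρ) satisfies the variation of constants formula u(t) = e^{−t} u(0) + ∫₀^t e^{s−t} [J∗(f∘u(s)) + h] ds for all t ≥ 0, and ‖u(0)‖_{L^p(ℝ^N,ρ)} ≤ R + ε } admits a finite covering by balls of L^p(ℝ^N, ρ) of radius smaller than η. -/
open MeasureTheory Metric ENNReal NNReal Set Filter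

noncomputable section

variable {N : ℕ}

open Classical in
/-- Selection of a witness representative. -/
def φsel {p : ℝ≥0∞} {μ : Measure (EuclideanSpace ℝ (Fin N))} [Fact (1 ≤ p)]
    (L : ℝ≥0) (M : ℝ) (w : Lp ℝ p μ) : EuclideanSpace ℝ (Fin N) → ℝ :=
  if h : ∃ φ : EuclideanSpace ℝ (Fin N) → ℝ,
      LipschitzWith L φ ∧ (∀ x, |φ x| ≤ M) ∧ ⇑w =ᵐ[μ] φ then h.choose else 0

lemma tb_lipclass (p : ℝ≥0∞) (hp1 : 1 < p) (hp2 : p ≠ ∞) [Fact (1 ≤ p)]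
    (μ : Measure (EuclideanSpace ℝ (Fin N))) [IsProbabilityMeasure μ]
    (L : ℝ≥0) (M : ℝ) (hM : 0 ≤ M) :
    TotallyBounded {w : Lp ℝ p μ |
      ∃ φ : EuclideanSpace ℝ (Fin N) → ℝ, LipschitzWith L φ ∧ (∀ x, |φ x| ≤ M)
        ∧ ⇑w =ᵐ[μ] φ} := by
  classical
  set E := EuclideanSpace ℝ (Fin N)
  set B : Set (Lp ℝ p μ) := {w : Lp ℝ p μ |
      ∃ φ : E → ℝ, LipschitzWith L φ ∧ (∀ x, |φ x| ≤ M) ∧ ⇑w =ᵐ[μ] φ} with hB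
  have hp0 : p ≠ 0 := (zero_lt_one.trans hp1).ne'
  have hpt : 0 < p.toReal := ENNReal.toReal_pos hp0 hp2
  have hsel : ∀ w ∈ B, LipschitzWith L (φsel L M w) ∧ (∀ x, |φsel L M w x| ≤ M)
      ∧ ⇑w =ᵐ[μ] φsel L M w := by
    intro w hw
    rw [hB, Set.mem_setOf_eq] at hw
    rw [φsel, dif_pos hw]
    exact hw.choose_spec
  rw [Metric.totallyBounded_iff]
  intro ε hε
  set ε₁ : ℝ := ε / 8 with hε₁def
  have hε₁ : 0 < ε₁ := by positivity
  set δ' : ℝ := ε / (8 * ((L : ℝ) + 1)) with hδ'def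
  have hδ' : 0 < δ' := by positivity
  -- tail
  obtain ⟨r, hr⟩ : ∃ r : ℕ, μ ((closedBall (0 : E) r)ᶜ) <
      ENNReal.ofReal (ε / (8 * (M + 1))) ^ p.toReal := by
    have h1 : Tendsto (fun n : ℕ => μ ((closedBall (0 : E) n)ᶜ)) atTop
        (nhds (μ (⋂ n : ℕ, (closedBall (0 : E) n)ᶜ))) := by
      refine tendsto_measure_iInter_atTop (fun n => (measurableSet_closedBall.compl).nullMeasurableSet)
        (fun m n hmn => compl_subset_compl.2 (closedBall_subset_closedBall (by exact_mod_cast Nat.cast_le.mpr hmn)))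
        ⟨0, measure_ne_top μ _⟩
    have h2 : (⋂ n : ℕ, (closedBall (0 : E) n)ᶜ) = ∅ := by
      rw [← compl_iUnion, compl_empty_iff]
      ext x
      simp only [mem_iUnion, mem_closedBall, dist_zero_right, mem_univ, iff_true]
      obtain ⟨n, hn⟩ := exists_nat_ge ‖x‖
      exact ⟨n, hn⟩
    rw [h2, measure_empty] at h1
    have hpos : (0 : ℝ≥0∞) < ENNReal.ofReal (ε / (8 * (M + 1))) ^ p.toReal := by
      apply ENNReal.rpow_pos
      · rw [ENNReal.ofReal_pos]; positivity
      · exact ENNReal.ofReal_ne_top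
    exact (h1.eventually_lt_const hpos).exists
  set Kc : Set E := closedBall (0 : E) (r : ℝ) with hKcdef
  obtain ⟨t, htf, htc⟩ := (Metric.totallyBounded_iff).1
    (isCompact_closedBall (0 : E) (r : ℝ)).totallyBounded δ' hδ'
  haveI : Nonempty (Lp ℝ p μ) := ⟨0⟩
  haveI := htf.to_subtype
  set ind : Lp ℝ p μ → (t → ℤ) := fun w y => ⌊φsel L M w y / ε₁⌋ with hinddef
  have hLd : 2 * (L : ℝ) * δ' ≤ ε / 4 := by
    have hL1 : (0:ℝ) < (L:ℝ) + 1 := by positivity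
    have heq : 2 * ((L:ℝ) + 1) * (ε / (8 * ((L:ℝ) + 1))) = ε / 4 := by
      field_simp; ring
    calc 2 * (L : ℝ) * δ' ≤ 2 * ((L:ℝ) + 1) * δ' := by
          have : (0:ℝ) ≤ δ' := hδ'.le
          nlinarith
      _ = ε / 4 := heq
  set c₁ : ℝ := ε₁ + 2 * (L : ℝ) * δ' with hc₁def
  have hc₁ : 0 ≤ c₁ := by positivity
  have key : ∀ w ∈ B, ∀ w' ∈ B, ind w = ind w' → dist w w' < ε := by
    intro w hw w' hw' hindeq
    obtain ⟨hφL, hφM, hφae⟩ := hsel w hw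
    obtain ⟨hψL, hψM, hψae⟩ := hsel w' hw'
    set φ := φsel L M w with hφdef
    set ψ := φsel L M w' with hψdef
    have hfloor : ∀ y ∈ t, |φ y - ψ y| ≤ ε₁ := by
      intro y hy
      have hfl : ⌊φ y / ε₁⌋ = ⌊ψ y / ε₁⌋ := congrFun hindeq ⟨y, hy⟩
      have h1 : φ y / ε₁ - ψ y / ε₁ < 1 := by
        have ha := Int.lt_floor_add_one (φ y / ε₁)
        have hb := Int.floor_le (ψ y / ε₁)
        rw [hfl] at ha
        push_cast at ha hb
        linarith
      have h2 : ψ y / ε₁ - φ y / ε₁ < 1 := by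
        have ha := Int.lt_floor_add_one (ψ y / ε₁)
        have hb := Int.floor_le (φ y / ε₁)
        rw [← hfl] at ha
        push_cast at ha hb
        linarith
      have habs : |φ y / ε₁ - ψ y / ε₁| ≤ 1 := (abs_sub_lt_iff.2 ⟨h1, h2⟩).le
      have hrw : φ y - ψ y = (φ y / ε₁ - ψ y / ε₁) * ε₁ := by field_simp
      rw [hrw, abs_mul, abs_of_pos hε₁]
      nlinarith
    have hpw : ∀ x, |φ x - ψ x| ≤ c₁ + Kcᶜ.indicator (fun _ => 2 * M) x := by
      intro x
      by_cases hx : x ∈ Kc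
      · have hx' : x ∉ Kcᶜ := fun hc => hc hx
        rw [Set.indicator_of_notMem hx', add_zero]
        obtain ⟨y, hyt, hxy⟩ := Set.mem_iUnion₂.1 (htc hx)
        have hdxy : dist x y ≤ δ' := (mem_ball.1 hxy).le
        have h1 : |φ x - φ y| ≤ (L : ℝ) * δ' := by
          have := hφL.dist_le_mul x y
          rw [Real.dist_eq] at this
          exact this.trans (by nlinarith [L.coe_nonneg])
        have h2 : |ψ y - ψ x| ≤ (L : ℝ) * δ' := by
          have := hψL.dist_le_mul y x
          rw [Real.dist_eq] at this
          rw [dist_comm] at this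
          exact this.trans (by nlinarith [L.coe_nonneg])
        have h3 := hfloor y hyt
        have t1 : |φ x - ψ x| ≤ |φ x - φ y| + |φ y - ψ x| := abs_sub_le _ _ _
        have t2 : |φ y - ψ x| ≤ |φ y - ψ y| + |ψ y - ψ x| := abs_sub_le _ _ _
        rw [hc₁def]
        linarith
      · have hx' : x ∈ Kcᶜ := hx
        rw [Set.indicator_of_mem hx']
        have h1 := abs_le.1 (hφM x)
        have h2 := abs_le.1 (hψM x)
        have : |φ x - ψ x| ≤ 2 * M := by
          rw [abs_le]; constructor <;> linarith
        linarith
    have hwsub : ⇑(w - w') =ᵐ[μ] fun x => φ x - ψ x := by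
      filter_upwards [Lp.coeFn_sub w w', hφae, hψae] with x hx h1 h2
      simp only [hx, Pi.sub_apply, h1, h2]
    have e1 : eLpNorm (fun x => φ x - ψ x) p μ ≤
        eLpNorm (fun x => c₁ + Kcᶜ.indicator (fun _ => 2 * M) x) p μ := by
      apply eLpNorm_mono
      intro x
      rw [Real.norm_eq_abs, Real.norm_eq_abs]
      exact (hpw x).trans (le_abs_self _)
    have e2 : eLpNorm (fun x => c₁ + Kcᶜ.indicator (fun _ => 2 * M) x) p μ ≤
        eLpNorm (fun _ : E => c₁) p μ + eLpNorm (Kcᶜ.indicator (fun _ => 2 * M)) p μ :=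
      eLpNorm_add_le aestronglyMeasurable_const
        ((stronglyMeasurable_const.indicator
          measurableSet_closedBall.compl).aestronglyMeasurable) hp1.le
    have e3 : eLpNorm (fun _ : E => c₁) p μ ≤ ENNReal.ofReal c₁ := by
      rw [eLpNorm_const _ hp0 (IsProbabilityMeasure.ne_zero μ)]
      simp [measure_univ, ENNReal.one_rpow, Real.enorm_eq_ofReal hc₁]
    have e4 : eLpNorm (Kcᶜ.indicator (fun _ => 2 * M)) p μ ≤ ENNReal.ofReal (ε / 4) := by
      rw [eLpNorm_indicator_const measurableSet_closedBall.compl hp0 hp2]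
      have hM1 : (0:ℝ) < M + 1 := by linarith
      calc (‖(2 * M : ℝ)‖₊ : ℝ≥0∞) * μ Kcᶜ ^ (1 / p.toReal)
          ≤ ENNReal.ofReal (2 * M) *
            (ENNReal.ofReal (ε / (8 * (M + 1))) ^ p.toReal) ^ (1 / p.toReal) := by
            refine mul_le_mul' (le_of_eq ?_) (ENNReal.rpow_le_rpow hr.le (by positivity))
            exact Real.enorm_eq_ofReal (by positivity)
        _ = ENNReal.ofReal (2 * M) * ENNReal.ofReal (ε / (8 * (M + 1))) := by
            rw [← ENNReal.rpow_mul, mul_one_div, div_self hpt.ne', ENNReal.rpow_one]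
        _ = ENNReal.ofReal (2 * M * (ε / (8 * (M + 1)))) :=
            (ENNReal.ofReal_mul (by positivity)).symm
        _ ≤ ENNReal.ofReal (ε / 4) := by
            apply ENNReal.ofReal_le_ofReal
            have heq : 2 * (M + 1) * (ε / (8 * (M + 1))) = ε / 4 := by
              field_simp; ring
            nlinarith [div_pos hε (by positivity : (0:ℝ) < 8 * (M + 1))]
    have etot : eLpNorm (⇑(w - w')) p μ ≤ ENNReal.ofReal (c₁ + ε / 4) := by
      rw [eLpNorm_congr_ae hwsub, ENNReal.ofReal_add hc₁ (by positivity : (0:ℝ) ≤ ε/4)]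
      exact e1.trans (e2.trans (add_le_add e3 e4))
    have hd : dist w w' ≤ c₁ + ε / 4 := by
      rw [dist_eq_norm, Lp.norm_def]
      exact ENNReal.toReal_le_of_le_ofReal (by positivity) etot
    have : c₁ + ε / 4 < ε := by
      rw [hc₁def, hε₁def]
      linarith
    linarith
  have himfin : (ind '' B).Finite := by
    have hsub : ind '' B ⊆ Set.pi Set.univ (fun _ : t => Set.Icc ⌊-(M / ε₁)⌋ ⌊M / ε₁⌋) := by
      rintro v ⟨w, hw, rfl⟩
      rw [Set.mem_univ_pi]
      intro y
      obtain ⟨-, hφM, -⟩ := hsel w hw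
      have hb := abs_le.1 (hφM y)
      simp only [Set.mem_Icc, hinddef]
      constructor
      · rw [← neg_div]
        exact Int.floor_mono (by gcongr; exact hb.1)
      · exact Int.floor_mono (by gcongr; exact hb.2)
    exact (Set.Finite.pi (fun _ => Set.finite_Icc _ _)).subset hsub
  refine ⟨Function.invFunOn ind B '' (ind '' B), himfin.image _, ?_⟩
  intro w hw
  have h2 : Function.invFunOn ind B (ind w) ∈ B := Function.invFunOn_mem ⟨w, hw, rfl⟩
  have h3 : ind (Function.invFunOn ind B (ind w)) = ind w := Function.invFunOn_eq ⟨w, hw, rfl⟩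
  refine Set.mem_iUnion₂.2 ⟨_, ⟨_, ⟨w, hw, rfl⟩, rfl⟩, ?_⟩
  rw [mem_ball]
  exact key w hw _ h2 h3.symm



lemma conv_est {N : ℕ} (J : EuclideanSpace ℝ (Fin N) → ℝ) (hJC1 : ContDiff ℝ 1 J)
    (hJnn : ∀ x, 0 ≤ J x) (hJsupp : ∀ x, J x ≠ 0 → ‖x‖ ≤ 1)
    (MJ : ℝ) (hMJ : ∀ x, ‖fderiv ℝ J x‖ ≤ MJ)
    (a h : ℝ) (ha : 0 ≤ a)
    (v : EuclideanSpace ℝ (Fin N) → ℝ) (hv : AEStronglyMeasurable v volume)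
    (hva : ∀ y, |v y| ≤ a) :
    LipschitzWith (Real.toNNReal (2 * a * MJ *
        (volume (closedBall (0 : EuclideanSpace ℝ (Fin N)) 1)).toReal))
      (fun x => (∫ y, J (x - y) * v y) + h) ∧
    ∀ x, |(∫ y, J (x - y) * v y) + h| ≤ a * (∫ z, J z) + |h| := by
  have hMJ0 : 0 ≤ MJ := (norm_nonneg _).trans (hMJ 0)
  have hJcont : Continuous J := hJC1.continuous
  have hJcs : HasCompactSupport J := by
    refine IsCompact.of_isClosed_subset (isCompact_closedBall (0 : EuclideanSpace ℝ (Fin N)) 1)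
      (isClosed_tsupport J) (closure_minimal ?_ Metric.isClosed_closedBall)
    intro x hx
    rw [Function.mem_support] at hx
    simpa [mem_closedBall, dist_zero_right] using hJsupp x hx
  have Jint : Integrable J (volume : Measure (EuclideanSpace ℝ (Fin N))) :=
    hJcont.integrable_of_hasCompactSupport hJcs
  have JLip : LipschitzWith ⟨MJ, hMJ0⟩ J := by
    refine lipschitzWith_of_nnnorm_fderiv_le (hJC1.differentiable one_ne_zero) fun x => ?_
    change ((‖fderiv ℝ J x‖₊ : ℝ≥0) : ℝ) ≤ MJ
    rw [coe_nnnorm]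
    exact hMJ x
  have JX : ∀ x : EuclideanSpace ℝ (Fin N), Integrable (fun y => J (x - y)) volume := fun x =>
    Jint.comp_sub_left x
  have hmeas : ∀ x : EuclideanSpace ℝ (Fin N), AEStronglyMeasurable (fun y => J (x - y) * v y) volume := fun x =>
    ((hJcont.comp (continuous_const.sub continuous_id)).aestronglyMeasurable).mul hv
  have hptb : ∀ x : EuclideanSpace ℝ (Fin N), ∀ y, ‖J (x - y) * v y‖ ≤ a * J (x - y) := by
    intro x y
    rw [norm_mul, Real.norm_eq_abs, Real.norm_eq_abs, abs_of_nonneg (hJnn _)]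
    calc J (x - y) * |v y| ≤ J (x - y) * a :=
          mul_le_mul_of_nonneg_left (hva y) (hJnn _)
      _ = a * J (x - y) := mul_comm _ _
  have hint : ∀ x : EuclideanSpace ℝ (Fin N), Integrable (fun y => J (x - y) * v y) volume := fun x =>
    Integrable.mono' ((JX x).const_mul a) (hmeas x) (Eventually.of_forall (hptb x))
  constructor
  · -- Lipschitz
    refine LipschitzWith.of_dist_le_mul fun x x' => ?_
    set d := dist x x' with hd
    have hd0 : 0 ≤ d := dist_nonneg
    set V := (volume (closedBall (0 : EuclideanSpace ℝ (Fin N)) 1)).toReal with hV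
    have hV0 : 0 ≤ V := ENNReal.toReal_nonneg
    have hdiff : (fun y => J (x - y) * v y - J (x' - y) * v y) =
        fun y => (J (x - y) - J (x' - y)) * v y := by
      funext y; ring
    have hJd : ∀ y, |J (x - y) - J (x' - y)| ≤ MJ * d := by
      intro y
      have := JLip.dist_le_mul (x - y) (x' - y)
      rw [Real.dist_eq, dist_sub_right] at this
      exact this
    set bnd : EuclideanSpace ℝ (Fin N) → ℝ := fun y => a * MJ * d *
        ((closedBall x 1).indicator (fun _ => (1:ℝ)) y +
         (closedBall x' 1).indicator (fun _ => (1:ℝ)) y) with hbnd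
    have hbint : Integrable bnd volume := by
      apply Integrable.const_mul
      apply Integrable.add <;>
      · rw [integrable_indicator_iff measurableSet_closedBall]
        exact integrableOn_const measure_closedBall_lt_top.ne
    have hptw : ∀ y, ‖(J (x - y) - J (x' - y)) * v y‖ ≤ bnd y := by
      intro y
      have hind1 : 0 ≤ (closedBall x 1).indicator (fun _ => (1:ℝ)) y :=
        Set.indicator_nonneg (fun _ _ => zero_le_one) y
      have hind2 : 0 ≤ (closedBall x' 1).indicator (fun _ => (1:ℝ)) y :=
        Set.indicator_nonneg (fun _ _ => zero_le_one) y
      by_cases h1 : J (x - y) = 0 ∧ J (x' - y) = 0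
      · rw [h1.1, h1.2, sub_zero, zero_mul, norm_zero]
        positivity
      · have hone : 1 ≤ (closedBall x 1).indicator (fun _ => (1:ℝ)) y +
            (closedBall x' 1).indicator (fun _ => (1:ℝ)) y := by
          rcases not_and_or.1 h1 with h2 | h2
          · have : y ∈ closedBall x 1 := by
              rw [mem_closedBall, dist_comm, dist_eq_norm]
              exact hJsupp _ h2
            rw [Set.indicator_of_mem this]
            linarith
          · have : y ∈ closedBall x' 1 := by
              rw [mem_closedBall, dist_comm, dist_eq_norm]
              exact hJsupp _ h2
            rw [Set.indicator_of_mem this]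
            linarith
        have hb1 : ‖(J (x - y) - J (x' - y)) * v y‖ ≤ (MJ * d) * a := by
          rw [norm_mul, Real.norm_eq_abs, Real.norm_eq_abs]
          have := mul_le_mul (hJd y) (hva y) (abs_nonneg _) (by positivity)
          exact this
        calc ‖(J (x - y) - J (x' - y)) * v y‖ ≤ (MJ * d) * a := hb1
          _ = a * MJ * d * 1 := by ring
          _ ≤ bnd y := by
              rw [hbnd]
              exact mul_le_mul_of_nonneg_left hone (by positivity)
    have hlhs : dist ((∫ y, J (x - y) * v y) + h) ((∫ y, J (x' - y) * v y) + h) =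
        ‖∫ y, (J (x - y) - J (x' - y)) * v y‖ := by
      rw [Real.dist_eq, add_sub_add_right_eq_sub, ← integral_sub (hint x) (hint x'), hdiff,
        Real.norm_eq_abs]
    have hbint_eq : ∫ y, bnd y = a * MJ * d * (2 * V) := by
      rw [hbnd]
      rw [integral_const_mul]
      congr 1
      rw [integral_add]
      · rw [integral_indicator_const _ measurableSet_closedBall,
          integral_indicator_const _ measurableSet_closedBall,
          measureReal_def, measureReal_def,
          Measure.addHaar_closedBall_center volume x,
          Measure.addHaar_closedBall_center volume x']
        simp only [smul_eq_mul, mul_one]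
        rw [hV]
        ring
      · rw [integrable_indicator_iff measurableSet_closedBall]
        exact integrableOn_const measure_closedBall_lt_top.ne
      · rw [integrable_indicator_iff measurableSet_closedBall]
        exact integrableOn_const measure_closedBall_lt_top.ne
    rw [hlhs]
    calc ‖∫ y, (J (x - y) - J (x' - y)) * v y‖ ≤ ∫ y, bnd y :=
          norm_integral_le_of_norm_le hbint (Eventually.of_forall hptw)
      _ = a * MJ * d * (2 * V) := hbint_eq
      _ = (2 * a * MJ * V) * d := by ring
      _ ≤ (Real.toNNReal (2 * a * MJ * V) : ℝ) * d := by
          gcongr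
          exact Real.le_coe_toNNReal _
  · -- bound
    intro x
    have h1 : |∫ y, J (x - y) * v y| ≤ a * (∫ z, J z) := by
      rw [← Real.norm_eq_abs]
      calc ‖∫ y, J (x - y) * v y‖ ≤ ∫ y, a * J (x - y) :=
            norm_integral_le_of_norm_le ((JX x).const_mul a) (Eventually.of_forall (hptb x))
        _ = a * ∫ y, J (x - y) := integral_const_mul _ _
        _ = a * ∫ z, J z := by rw [integral_sub_left_eq_self J volume x]
    calc |(∫ y, J (x - y) * v y) + h| ≤ |∫ y, J (x - y) * v y| + |h| := abs_add_le _ _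
      _ ≤ a * (∫ z, J z) + |h| := by linarith


lemma tb_cch {X : Type*} [NormedAddCommGroup X] [NormedSpace ℝ X] {s : Set X}
    (hs : TotallyBounded s) :
    TotallyBounded (closure (convexHull ℝ (insert (0:X) s))) :=
  (totallyBounded_convexHull.2 (hs.insert 0)).closure

/-- Under (H1)-(H4), with `R = a K^{1/p} ‖J‖_{L¹} + h` and `ε > 0` fixed:
for every `η > 0` there is `t_η > 0` such that the set of values at time `t_η` of all
solutions of the variation of constants formula starting in the ball of radius `R + ε`
admits a finite covering by balls of `L^p(ℝ^N, ρ)` of radius smaller than `η`. -/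
theorem stmt_11 (N : ℕ) (hN : 1 ≤ N) (p : ℝ≥0∞) (hp1 : 1 < p) (hp2 : p ≠ ∞)
    [Fact (1 ≤ p)]
    (h a k₁ K S : ℝ) (hh : 0 < h) (ha : 0 < a) (hk₁ : 0 < k₁) (hK : 0 < K) (hS : 0 < S)
    (f : ℝ → ℝ) (hf : ∀ x y : ℝ, |f x - f y| ≤ k₁ * |x - y|)
    (hfa : ∀ x : ℝ, |f x| ≤ a)
    (J : EuclideanSpace ℝ (Fin N) → ℝ)
    (hJC1 : ContDiff ℝ 1 J) (hJnn : ∀ x, 0 ≤ J x)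
    (hJeven : ∀ x, J (-x) = J x)
    (hJsupp : ∀ x, J x ≠ 0 → ‖x‖ ≤ 1)
    (hJdbdd : ∃ M : ℝ, ∀ x, ‖fderiv ℝ J x‖ ≤ M)
    (hH4 : ∀ i : Fin N,
      (∀ x : EuclideanSpace ℝ (Fin N),
        (∫ y, |fderiv ℝ J (x - y) (EuclideanSpace.single i (1:ℝ))|) ≤ S) ∧
      (∀ y : EuclideanSpace ℝ (Fin N),
        (∫ x, |fderiv ℝ J (x - y) (EuclideanSpace.single i (1:ℝ))|) ≤ S))
    (ρ : EuclideanSpace ℝ (Fin N) → ℝ)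
    (hρpos : ∀ x, 0 < ρ x) (hρint : Integrable ρ)
    (hρeven : ∀ x, ρ (-x) = ρ x) (hρ1 : ∫ x, ρ x = 1)
    (hH2 : ∀ y x : EuclideanSpace ℝ (Fin N), dist x y ≤ 1 → ρ x ≤ K * ρ y)
    (μ : Measure (EuclideanSpace ℝ (Fin N)))
    (hμ : μ = volume.withDensity fun x => ENNReal.ofReal (ρ x))
    (R : ℝ) (hR : R = a * K ^ (1 / p.toReal) * (∫ z, |J z|) + h)
    (ε : ℝ) (hε : 0 < ε) :
    ∀ η : ℝ, 0 < η → ∃ tη : ℝ, 0 < tη ∧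
      ∃ (C : Finset (Lp ℝ p μ)) (rad : Lp ℝ p μ → ℝ),
        (∀ c ∈ C, rad c < η) ∧
        {v : Lp ℝ p μ | ∃ u g : ℝ → Lp ℝ p μ,
            (∀ s : ℝ, ⇑(g s) =ᵐ[μ] fun x =>
              (∫ y, J (x - y) * f ((u s : EuclideanSpace ℝ (Fin N) → ℝ) y)) + h) ∧
            (∀ t : ℝ, 0 ≤ t →
              u t = Real.exp (-t) • u 0 + ∫ s in (0:ℝ)..t, Real.exp (s - t) • g s) ∧
            ‖u 0‖ ≤ R + ε ∧ v = u tη}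
          ⊆ ⋃ c ∈ C, ball c (rad c) := by
  classical
  haveI : IsProbabilityMeasure μ := by
    constructor
    rw [hμ, withDensity_apply _ MeasurableSet.univ, Measure.restrict_univ,
      ← MeasureTheory.ofReal_integral_eq_lintegral_ofReal hρint
        (Eventually.of_forall fun x => (hρpos x).le), hρ1, ENNReal.ofReal_one]
  have hfc : Continuous f := by
    have : LipschitzWith k₁.toNNReal f := by
      refine LipschitzWith.of_dist_le_mul fun x y => ?_
      rw [Real.dist_eq, Real.dist_eq, Real.coe_toNNReal _ hk₁.le]
      exact hf x y
    exact this.continuous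
  obtain ⟨MJ₀, hMJ₀⟩ := hJdbdd
  set V : ℝ := (volume (closedBall (0 : EuclideanSpace ℝ (Fin N)) 1)).toReal with hVdef
  set Lc : ℝ≥0 := Real.toNNReal (2 * a * MJ₀ * V) with hLcdef
  set Mb : ℝ := a * (∫ z, J z) + |h| with hMbdef
  have hMb : 0 ≤ Mb := by
    have h1 : 0 ≤ ∫ z, J z := integral_nonneg hJnn
    have := abs_nonneg h
    positivity
  set B : Set (Lp ℝ p μ) := {w : Lp ℝ p μ |
      ∃ φ : EuclideanSpace ℝ (Fin N) → ℝ, LipschitzWith Lc φ ∧ (∀ x, |φ x| ≤ Mb)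
        ∧ ⇑w =ᵐ[μ] φ} with hBdef
  have hTB_B : TotallyBounded B := tb_lipclass p hp1 hp2 μ Lc Mb hMb
  set 𝒞 : Set (Lp ℝ p μ) := closure (convexHull ℝ (insert 0 B)) with h𝒞def
  have hTBC : TotallyBounded 𝒞 := tb_cch hTB_B
  have h0C : (0 : Lp ℝ p μ) ∈ 𝒞 := subset_closure (subset_convexHull ℝ _ (Set.mem_insert _ _))
  have hconvC : Convex ℝ 𝒞 := (convex_convexHull ℝ _).closure
  have hRpos : 0 < R + ε := by
    have h1 : 0 ≤ a * K ^ (1 / p.toReal) * (∫ z, |J z|) := by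
      have h2 : 0 ≤ ∫ z, |J z| := integral_nonneg fun z => abs_nonneg _
      have h3 : (0:ℝ) < K ^ (1 / p.toReal) := Real.rpow_pos_of_pos hK _
      positivity
    rw [hR]; linarith
  intro η hη
  -- choose tη
  set q : ℝ := 2 * (R + ε) / η with hqdef
  have hq : 0 < q := by positivity
  set tη : ℝ := max 1 (Real.log q + 1) with htηdef
  have htηpos : (0:ℝ) < tη := lt_of_lt_of_le one_pos (le_max_left _ _)
  have hlogq : Real.log q < tη := lt_of_lt_of_le (lt_add_one _) (le_max_right _ _)
  have hexp : Real.exp (-tη) * (R + ε) < η / 2 := by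
    have h1 : Real.exp (-tη) < q⁻¹ := by
      rw [← Real.exp_log hq, ← Real.exp_neg]
      exact Real.exp_lt_exp.2 (neg_lt_neg hlogq)
    have h2 : q⁻¹ * (R + ε) = η / 2 := by
      rw [hqdef]
      field_simp
    calc Real.exp (-tη) * (R + ε) < q⁻¹ * (R + ε) :=
          mul_lt_mul_of_pos_right h1 hRpos
      _ = η / 2 := h2
  -- covering of 𝒞
  obtain ⟨cs, hcsfin, hcscov⟩ := Metric.totallyBounded_iff.1 hTBC (η / 2) (by positivity)
  refine ⟨tη, htηpos, hcsfin.toFinset, fun _ => η / 2 + Real.exp (-tη) * (R + ε), ?_, ?_⟩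
  · intro c _
    linarith
  intro v hv
  obtain ⟨u, g, hg, hVOC, hu0, hveq⟩ := hv
  -- every g s belongs to B
  have hgB : ∀ s : ℝ, g s ∈ B := by
    intro s
    have hum : AEStronglyMeasurable (⇑(u s)) volume :=
      (Lp.stronglyMeasurable (u s)).aestronglyMeasurable
    have hv' : AEStronglyMeasurable (fun y => f ((u s) y)) volume :=
      hfc.comp_aestronglyMeasurable hum
    obtain ⟨hlip, hbd⟩ := conv_est J hJC1 hJnn hJsupp MJ₀ hMJ₀ a h ha.le
      (fun y => f ((u s) y)) hv' (fun y => hfa _)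
    exact ⟨_, hlip, hbd, hg s⟩
  -- the integral term lies in 𝒞
  have hwC : (∫ s in (0:ℝ)..tη, Real.exp (s - tη) • g s) ∈ 𝒞 := by
    by_cases hInt : IntervalIntegrable (fun s => Real.exp (s - tη) • g s) volume 0 tη
    swap
    · rw [intervalIntegral.integral_undef hInt]
      exact h0C
    rw [intervalIntegral.integral_of_le htηpos.le]
    set dens : ℝ → ℝ≥0 := fun s => Real.toNNReal (Real.exp (s - tη)) with hdens
    have hdensm : Measurable dens :=
      ((Real.continuous_exp.comp (continuous_id.sub continuous_const)).measurable).real_toNNReal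
    set ν : Measure ℝ := (volume.restrict (Set.Ioc (0:ℝ) tη)).withDensity
      (fun s => (dens s : ℝ≥0∞)) with hν
    have hexpint : IntegrableOn (fun s => Real.exp (s - tη)) (Set.Ioc (0:ℝ) tη) volume :=
      (Real.continuous_exp.comp (continuous_id.sub continuous_const)).integrableOn_Ioc
    have hval : (∫ s in Set.Ioc (0:ℝ) tη, Real.exp (s - tη)) = 1 - Real.exp (-tη) := by
      rw [← intervalIntegral.integral_of_le htηpos.le]
      rw [intervalIntegral.integral_comp_sub_right (fun x => Real.exp x) tη]
      rw [integral_exp, sub_self, zero_sub, Real.exp_zero]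
    have hmass : ν Set.univ = ENNReal.ofReal (1 - Real.exp (-tη)) := by
      rw [hν, withDensity_apply _ MeasurableSet.univ, Measure.restrict_univ]
      have hcoe : (fun s => (dens s : ℝ≥0∞)) = fun s => ENNReal.ofReal (Real.exp (s - tη)) :=
        rfl
      rw [hcoe, ← MeasureTheory.ofReal_integral_eq_lintegral_ofReal hexpint
        (Eventually.of_forall fun s => (Real.exp_pos _).le), hval]
    have hmass_pos : (0:ℝ) < 1 - Real.exp (-tη) := by
      have : Real.exp (-tη) < 1 := Real.exp_lt_one_iff.2 (neg_neg_iff_pos.2 htηpos)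
      linarith
    haveI : IsFiniteMeasure ν := ⟨by rw [hmass]; exact ENNReal.ofReal_lt_top⟩
    haveI : NeZero ν := ⟨by
      rw [← Measure.measure_univ_ne_zero, hmass]
      exact (ENNReal.ofReal_pos.2 hmass_pos).ne'⟩
    have hgint : Integrable (fun s => g s) ν := by
      rw [hν, integrable_withDensity_iff_integrable_smul hdensm]
      have heq : (fun s => dens s • g s) = fun s => Real.exp (s - tη) • g s := by
        funext s
        rw [hdens, NNReal.smul_def, Real.coe_toNNReal _ (Real.exp_pos _).le]
      rw [heq]
      exact hInt.1
    have havg : (⨍ s, g s ∂ν) ∈ closure (convexHull ℝ B) :=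
      Convex.average_mem (convex_convexHull ℝ B).closure isClosed_closure
        (Eventually.of_forall fun s => subset_closure (subset_convexHull ℝ B (hgB s))) hgint
    have hIeq : (∫ s in Set.Ioc (0:ℝ) tη, Real.exp (s - tη) • g s) = ∫ s, g s ∂ν := by
      rw [hν, integral_withDensity_eq_integral_smul hdensm]
      congr 1
      funext s
      rw [hdens, NNReal.smul_def, Real.coe_toNNReal _ (Real.exp_pos _).le]
    have hcne : (ν Set.univ).toReal = 1 - Real.exp (-tη) := by
      rw [hmass, ENNReal.toReal_ofReal hmass_pos.le]
    have hI : (∫ s, g s ∂ν) = (ν Set.univ).toReal • ⨍ s, g s ∂ν := by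
      rw [MeasureTheory.average_eq, smul_smul, measureReal_def, mul_inv_cancel₀, one_smul]
      rw [hcne]
      exact hmass_pos.ne'
    rw [hIeq, hI]
    have havg' : (⨍ s, g s ∂ν) ∈ 𝒞 :=
      closure_mono (convexHull_mono (Set.subset_insert 0 B)) havg
    refine hconvC.smul_mem_of_zero_mem h0C havg' ?_
    constructor
    · rw [hcne]; linarith
    · rw [hcne]
      have : 0 < Real.exp (-tη) := Real.exp_pos _
      linarith
  -- conclude
  obtain ⟨y, hyc, hwy⟩ := Set.mem_iUnion₂.1 (hcscov hwC)
  refine Set.mem_iUnion₂.2 ⟨y, hcsfin.mem_toFinset.2 hyc, ?_⟩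
  rw [mem_ball]
  have hdecomp : v - (∫ s in (0:ℝ)..tη, Real.exp (s - tη) • g s) = Real.exp (-tη) • u 0 := by
    rw [hveq, hVOC tη htηpos.le]
    abel
  have h1 : dist v (∫ s in (0:ℝ)..tη, Real.exp (s - tη) • g s) ≤ Real.exp (-tη) * (R + ε) := by
    rw [dist_eq_norm, hdecomp, norm_smul, Real.norm_eq_abs, abs_of_pos (Real.exp_pos _)]
    exact mul_le_mul_of_nonneg_left hu0 (Real.exp_pos _).le
  have h2 : dist (∫ s in (0:ℝ)..tη, Real.exp (s - tη) • g s) y < η / 2 := mem_ball.1 hwy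
  calc dist v y ≤ dist v (∫ s in (0:ℝ)..tη, Real.exp (s - tη) • g s) +
        dist (∫ s in (0:ℝ)..tη, Real.exp (s - tη) • g s) y := dist_triangle _ _ _
    _ < Real.exp (-tη) * (R + ε) + η / 2 := by linarith
    _ = η / 2 + Real.exp (-tη) * (R + ε) := by ring

end
end
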